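/- arXiv:2312.06604 — 8 statements merged into one kernel-verified Lean document; each statement's English description precedes it below -/
import Mathlib

section
/- Let π : V → V be a permutation of a finite set V with n = |V| elements, and let P_π be the induced operator on functions (P_π f)(v) = f(π⁻¹ v). For any subsets A, B of V, define Σ_{π,S} = (⟨P_π 1_S, 1_S⟩ + ⟨P_π 1_{Sᶜ}, 1_{Sᶜ}⟩)/n. Then |Σ_{π,A} - Σ_{π,B}| ≤ √2 · √((|A ∩ Bᶜ| + |Aᶜ ∩ B|)/n). -/
open Finset

/-- For a permutation `π` of a finite set `V` with `n` elements, with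
`Σ_{π,S} = (⟨P_π 1_S, 1_S⟩ + ⟨P_π 1_{Sᶜ}, 1_{Sᶜ}⟩)/n` where `(P_π f)(v) = f(π⁻¹ v)`,
one has `|Σ_{π,A} - Σ_{π,B}| ≤ √2 · √((|A ∩ Bᶜ| + |Aᶜ ∩ B|)/n)`. -/
theorem sigma_diff_bound {V : Type*} [Fintype V] [DecidableEq V]
    (π : Equiv.Perm V) (A B : Finset V) :
    let n : ℝ := (Fintype.card V : ℝ)
    let ind : Finset V → V → ℝ := fun S v => if v ∈ S then 1 else 0
    let Sig : Finset V → ℝ := fun S =>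
      ((∑ v, ind S (π.symm v) * ind S v) + (∑ v, ind Sᶜ (π.symm v) * ind Sᶜ v)) / n
    |Sig A - Sig B| ≤
      Real.sqrt 2 * Real.sqrt ((((A ∩ Bᶜ).card : ℝ) + ((Aᶜ ∩ B).card : ℝ)) / n) := by
  intro n ind Sig
  set d : ℝ := ((A ∩ Bᶜ).card : ℝ) + ((Aᶜ ∩ B).card : ℝ) with hd
  have hd0 : 0 ≤ d := by positivity
  rw [← Real.sqrt_mul (by norm_num : (0:ℝ) ≤ 2)]
  rcases eq_or_lt_of_le (Nat.cast_nonneg (Fintype.card V) : (0:ℝ) ≤ n) with hn0 | hn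
  · have hE : IsEmpty V := Fintype.card_eq_zero_iff.mp (by exact_mod_cast hn0.symm)
    have : Sig A - Sig B = 0 := by simp [Sig, Finset.univ_eq_empty]
    rw [this, abs_zero]
    positivity
  have hn : (0:ℝ) < n := hn
  set T : Finset V → ℝ := fun S => ∑ v, |ind S (π.symm v) - ind S v| with hT
  have hcard : ∀ S : Finset V, (∑ v, ind S v) = (S.card : ℝ) := by
    intro S
    simp only [ind]
    rw [Finset.sum_ite_mem]
    simp
  have hSigT : ∀ S : Finset V, Sig S = (n - T S) / n := by
    intro S
    have hpt : ∀ v, ind S (π.symm v) * ind S v + ind Sᶜ (π.symm v) * ind Sᶜ v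
        = 1 - |ind S (π.symm v) - ind S v| := by
      intro v
      simp only [ind, Finset.mem_compl]
      by_cases h1 : π.symm v ∈ S <;> by_cases h2 : v ∈ S <;> simp [h1, h2] <;> norm_num
    have : (∑ v, ind S (π.symm v) * ind S v) + (∑ v, ind Sᶜ (π.symm v) * ind Sᶜ v)
        = n - T S := by
      rw [← Finset.sum_add_distrib]
      simp only [hpt]
      rw [Finset.sum_sub_distrib]
      simp [T, n, Finset.card_univ]
    simp [Sig, this]
  have hT0 : ∀ S, 0 ≤ T S := fun S => Finset.sum_nonneg fun v _ => abs_nonneg _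
  have hT1 : ∀ S, T S ≤ n := by
    intro S
    have h : ∀ v ∈ Finset.univ, |ind S (π.symm v) - ind S v| ≤ 1 := by
      intro v _
      simp only [ind]
      by_cases h1 : π.symm v ∈ S <;> by_cases h2 : v ∈ S <;> simp [h1, h2]
    calc T S ≤ ∑ _v : V, (1:ℝ) := Finset.sum_le_sum h
    _ = n := by simp [n, Finset.card_univ]
  have hdiff : Sig A - Sig B = (T B - T A) / n := by
    rw [hSigT A, hSigT B, div_sub_div_same]; ring_nf
  have hsum : (∑ v, |ind A v - ind B v|) = d := by
    have hpt : ∀ v, |ind A v - ind B v| = ind (A ∩ Bᶜ) v + ind (Aᶜ ∩ B) v := by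
      intro v
      simp only [ind, Finset.mem_inter, Finset.mem_compl]
      by_cases h1 : v ∈ A <;> by_cases h2 : v ∈ B <;> simp [h1, h2]
    simp only [hpt]
    rw [Finset.sum_add_distrib, hcard, hcard, hd]
  have hkey : |T B - T A| ≤ 2 * d := by
    have h1 : |T B - T A| ≤
        ∑ v, |(ind B (π.symm v) - ind B v) - (ind A (π.symm v) - ind A v)| := by
      rw [hT]
      dsimp only
      rw [← Finset.sum_sub_distrib]
      refine (Finset.abs_sum_le_sum_abs _ _).trans
        (Finset.sum_le_sum fun v _ => abs_abs_sub_abs_le_abs_sub _ _)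
    have h2 : ∀ v, |(ind B (π.symm v) - ind B v) - (ind A (π.symm v) - ind A v)|
        ≤ |ind A (π.symm v) - ind B (π.symm v)| + |ind A v - ind B v| := by
      intro v
      have h : (ind B (π.symm v) - ind B v) - (ind A (π.symm v) - ind A v)
          = -((ind A (π.symm v) - ind B (π.symm v)) - (ind A v - ind B v)) := by ring
      rw [h, abs_neg]
      exact abs_sub _ _
    have h3 : (∑ v, |ind A (π.symm v) - ind B (π.symm v)|) = ∑ v, |ind A v - ind B v| :=
      Equiv.sum_comp π.symm (fun v => |ind A v - ind B v|)
    have h4 : (∑ v, |(ind B (π.symm v) - ind B v) - (ind A (π.symm v) - ind A v)|)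
        ≤ ∑ v, (|ind A (π.symm v) - ind B (π.symm v)| + |ind A v - ind B v|) :=
      Finset.sum_le_sum fun v _ => h2 v
    have h5 : (∑ v, (|ind A (π.symm v) - ind B (π.symm v)| + |ind A v - ind B v|)) = 2 * d := by
      rw [Finset.sum_add_distrib, h3, hsum]; ring
    linarith
  rw [hdiff, abs_div, abs_of_pos hn]
  rcases le_or_gt (2 * d) n with hc | hc
  · have hle : |T B - T A| / n ≤ 2 * d / n := (div_le_div_iff_of_pos_right hn).mpr hkey
    refine hle.trans ?_
    have hx0 : 0 ≤ 2 * d / n := by positivity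
    have hx1 : 2 * d / n ≤ 1 := (div_le_one hn).mpr hc
    rw [Real.le_sqrt hx0, show 2 * (d / n) = 2 * d / n from by ring]
    · nlinarith
    · positivity
  · have hle : |T B - T A| / n ≤ 1 := by
      rw [div_le_one hn, abs_sub_le_iff]
      constructor <;> nlinarith [hT0 A, hT0 B, hT1 A, hT1 B]
    refine hle.trans ?_
    rw [show (1:ℝ) = Real.sqrt 1 from (Real.sqrt_one).symm]
    apply Real.sqrt_le_sqrt
    rw [show 2 * (d / n) = 2 * d / n from by ring]
    exact (one_le_div hn).mpr hc.le
end

section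
/- Let T be a self-adjoint operator on ℓ²(V) for a finite set V with |V| = n ≥ 2, with nonnegative entries, constant row sum d > 0, and second largest eigenvalue dμ₂ with μ₂ ≠ 1. Let f be a real eigenfunction of T with eigenvalue dμ, orthogonal to the constant function 1_V, with μ ≠ -1 and κ := (1+μ)/(1-μ₂) ∈ (0,1). Define f_sml := |f| - ⟨|f|, u⟩ u where u = (1/√n) 1_V. Then ‖f_sml‖₂² ≤ κ ‖f‖₂². -/
open Finset

/-- Let `T` be self-adjoint on `ℓ²(V)`, `|V| = n ≥ 2`, with nonnegative entries,
constant row sums `d > 0`, and second largest eigenvalue `d·μ₂` (expressed through the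
Rayleigh quotient bound on the orthogonal complement of constants), `μ₂ ≠ 1`.  Let `f`
be a real eigenfunction with eigenvalue `d·μ`, orthogonal to `1_V`, with `μ ≠ -1` and
`κ = (1+μ)/(1-μ₂) ∈ (0,1)`.  With `f_sml = |f| - ⟨|f|,u⟩u`, `u = (1/√n)1_V`,
one has `‖f_sml‖₂² ≤ κ‖f‖₂²`. -/
theorem abs_sml_norm_sq_le {V : Type*} [Fintype V] (hV : 2 ≤ Fintype.card V)
    (a : V → V → ℝ) (hsym : ∀ u v, a u v = a v u) (hnn : ∀ u v, 0 ≤ a u v)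
    (d μ μ₂ : ℝ) (hd : 0 < d) (hrow : ∀ u, ∑ v, a u v = d)
    (hray : ∀ g : V → ℝ, (∑ v, g v) = 0 →
      (∑ u, ∑ v, a u v * g u * g v) ≤ d * μ₂ * ∑ v, g v ^ 2)
    (hμ₂ : μ₂ ≠ 1)
    (f : V → ℝ) (heig : ∀ u, ∑ v, a u v * f v = d * μ * f u)
    (horth : (∑ v, f v) = 0) (hμ : μ ≠ -1)
    (hκ : 0 < (1 + μ) / (1 - μ₂) ∧ (1 + μ) / (1 - μ₂) < 1) :
    (∑ v, (|f v| - (∑ w, |f w|) / (Fintype.card V : ℝ)) ^ 2) ≤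
      ((1 + μ) / (1 - μ₂)) * ∑ v, f v ^ 2 := by
  classical
  set n : ℝ := (Fintype.card V : ℝ) with hn
  have hn2 : (2:ℝ) ≤ n := by rw [hn]; exact_mod_cast hV
  have hn0 : (0:ℝ) < n := by linarith
  by_cases hF : ∑ v, f v ^ 2 = 0
  · have hf0 : ∀ v, f v = 0 := by
      intro v
      have h := (Finset.sum_eq_zero_iff_of_nonneg (fun v _ => sq_nonneg (f v))).mp hF v
        (mem_univ v)
      exact pow_eq_zero_iff (two_ne_zero) |>.mp h
    simp [hf0]
  · set m : ℝ := (∑ w, |f w|) / n with hm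
    have hSf : ∑ w, |f w| = n * m := by
      rw [hm, mul_div_assoc']; exact (mul_div_cancel_left₀ _ hn0.ne').symm
    have hcol : ∀ v, ∑ u, a u v = d := fun v =>
      (Finset.sum_congr rfl fun u _ => hsym u v).trans (hrow v)
    have hNe : Nonempty V := Fintype.card_pos_iff.mp (by omega)
    obtain ⟨v₀, -, hv₀⟩ := Finset.exists_max_image (univ : Finset V) (fun v => |f v|)
      univ_nonempty
    have hv0pos : 0 < |f v₀| := by
      rcases (abs_nonneg (f v₀)).lt_or_eq with h | h
      · exact h
      · exfalso; apply hF
        apply Finset.sum_eq_zero; intro v _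
        have hle : |f v| ≤ 0 := h ▸ hv₀ v (mem_univ v)
        have : f v = 0 := abs_eq_zero.mp (le_antisymm hle (abs_nonneg _))
        simp [this]
    have hmu1 : -1 < μ := by
      by_contra hc; push_neg at hc
      have hlt : μ < -1 := lt_of_le_of_ne hc hμ
      have h1 : |d * μ * f v₀| ≤ d * |f v₀| := by
        rw [← heig v₀]
        calc |∑ w, a v₀ w * f w| ≤ ∑ w, |a v₀ w * f w| := Finset.abs_sum_le_sum_abs _ _
          _ = ∑ w, a v₀ w * |f w| := by
              exact Finset.sum_congr rfl fun w _ => by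
                rw [abs_mul, abs_of_nonneg (hnn v₀ w)]
          _ ≤ ∑ w, a v₀ w * |f v₀| := Finset.sum_le_sum fun w _ =>
              mul_le_mul_of_nonneg_left (hv₀ w (mem_univ w)) (hnn v₀ w)
          _ = d * |f v₀| := by rw [← Finset.sum_mul, hrow]
      rw [abs_mul, abs_mul, abs_of_nonneg hd.le,
        abs_of_neg (show μ < 0 by linarith)] at h1
      nlinarith [mul_pos hd hv0pos]
    have h1μ : 0 < 1 + μ := by linarith
    have hμ₂lt : μ₂ < 1 := by
      by_contra hc; push_neg at hc
      have : (1 + μ) / (1 - μ₂) ≤ 0 :=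
        div_nonpos_of_nonneg_of_nonpos h1μ.le (by linarith)
      linarith [hκ.1]
    set F := ∑ v, f v ^ 2 with hFdef
    set S := ∑ u, ∑ v, a u v * |f u| * |f v| with hSdef
    have hQ1 : ∑ v, (|f v| - m) ^ 2 = F - n * m ^ 2 := by
      have e : ∀ v : V, (|f v| - m) ^ 2 = f v ^ 2 - 2 * m * |f v| + m ^ 2 := fun v => by
        rw [sub_sq, sq_abs]; ring
      rw [Finset.sum_congr rfl fun v _ => e v]
      rw [Finset.sum_add_distrib, Finset.sum_sub_distrib, ← Finset.mul_sum, hSf,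
        Finset.sum_const, card_univ, nsmul_eq_mul, ← hn]
      ring
    have hA : ∑ u, ∑ v, a u v * f u * f v = d * μ * F := by
      calc ∑ u, ∑ v, a u v * f u * f v = ∑ u, f u * ∑ v, a u v * f v := by
            refine Finset.sum_congr rfl fun u _ => ?_
            rw [Finset.mul_sum]
            exact Finset.sum_congr rfl fun v _ => by ring
        _ = ∑ u, f u * (d * μ * f u) := Finset.sum_congr rfl fun u _ => by rw [heig]
        _ = d * μ * F := by
            rw [hFdef, Finset.mul_sum]
            exact Finset.sum_congr rfl fun u _ => by ring
    have hS : -(d * μ) * F ≤ S := by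
      have h : -(d * μ * F) ≤ S := by
        rw [← hA, ← Finset.sum_neg_distrib]
        refine Finset.sum_le_sum fun u _ => ?_
        rw [← Finset.sum_neg_distrib]
        refine Finset.sum_le_sum fun v _ => ?_
        have habs : |a u v * f u * f v| = a u v * |f u| * |f v| := by
          rw [abs_mul, abs_mul, abs_of_nonneg (hnn u v)]
        linarith [neg_abs_le (a u v * f u * f v), habs.le, habs.ge]
      linarith
    have e1 : ∑ u, ∑ v, a u v * |f u| = d * (n * m) := by
      have : ∀ u : V, ∑ v, a u v * |f u| = d * |f u| := fun u => by
        rw [← Finset.sum_mul, hrow]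
      rw [Finset.sum_congr rfl fun u _ => this u, ← Finset.mul_sum, hSf]
    have e2 : ∑ u, ∑ v, a u v * |f v| = d * (n * m) := by
      rw [Finset.sum_comm]
      have : ∀ v : V, ∑ u, a u v * |f v| = d * |f v| := fun v => by
        rw [← Finset.sum_mul, hcol]
      rw [Finset.sum_congr rfl fun v _ => this v, ← Finset.mul_sum, hSf]
    have e3 : ∑ u : V, ∑ v : V, a u v = n * d := by
      rw [Finset.sum_congr rfl fun u (_ : u ∈ univ) => hrow u, Finset.sum_const,
        card_univ, nsmul_eq_mul, ← hn]
    have hB : ∑ u, ∑ v, a u v * (|f u| - m) * (|f v| - m) = S - d * n * m ^ 2 := by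
      have expand : ∀ u v : V, a u v * (|f u| - m) * (|f v| - m)
          = a u v * |f u| * |f v| - m * (a u v * |f u|) - m * (a u v * |f v|)
            + m ^ 2 * a u v := fun u v => by ring
      calc ∑ u, ∑ v, a u v * (|f u| - m) * (|f v| - m)
          = ∑ u, ∑ v, (a u v * |f u| * |f v| - m * (a u v * |f u|)
              - m * (a u v * |f v|) + m ^ 2 * a u v) := by
            exact Finset.sum_congr rfl fun u _ => Finset.sum_congr rfl fun v _ => expand u v
        _ = S - m * (∑ u, ∑ v, a u v * |f u|) - m * (∑ u, ∑ v, a u v * |f v|)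
              + m ^ 2 * (∑ u, ∑ v, a u v) := by
            simp_rw [Finset.sum_add_distrib, Finset.sum_sub_distrib, ← Finset.mul_sum]
            rfl
        _ = S - d * n * m ^ 2 := by rw [e1, e2, e3]; ring
    have hg0 : ∑ v, (|f v| - m) = 0 := by
      rw [Finset.sum_sub_distrib, hSf, Finset.sum_const, card_univ, nsmul_eq_mul, ← hn]
      ring
    have hray' := hray (fun v => |f v| - m) hg0
    rw [hB, hQ1] at hray'
    have hkey : (F - n * m ^ 2) * (1 - μ₂) ≤ (1 + μ) * F := by
      have hd' : d * ((F - n * m ^ 2) * (1 - μ₂)) ≤ d * ((1 + μ) * F) := by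
        nlinarith [hray', hS]
      exact le_of_mul_le_mul_left hd' hd
    rw [hQ1, div_mul_eq_mul_div, le_div_iff₀ (by linarith : (0:ℝ) < 1 - μ₂)]
    exact hkey
end

section
/- With the notation of the decomposition lemma: let f be a real eigenfunction of T (self-adjoint, nonnegative entries, row sums d, second largest eigenvalue dμ₂ ≠ d) with eigenvalue dμ, orthogonal to 1_V, nonzero everywhere, and with κ := (1+μ)/(1-μ₂) ∈ (0,1). Define f_str := ⟨f, (1/√n)(1_{f>0} - 1_{f<0})⟩ · (1/√n)(1_{f>0} - 1_{f<0}) and f_sml := f - f_str. Then ‖f_sml‖₂ ≤ √κ ‖f‖₂ and ‖f_str‖₂ ≥ √(1-κ) ‖f‖₂. -/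
open Finset

/-- The signed indicator `1_{f>0} - 1_{f<0}`. -/
noncomputable def sgnInd {V : Type*} (f : V → ℝ) : V → ℝ :=
  fun v => if 0 < f v then 1 else if f v < 0 then -1 else 0

/-- The structured component
`f_str = ⟨f, (1/√n)(1_{f>0} - 1_{f<0})⟩ · (1/√n)(1_{f>0} - 1_{f<0})`. -/
noncomputable def fStr {V : Type*} [Fintype V] (f : V → ℝ) : V → ℝ :=
  fun v => ((∑ w, f w * sgnInd f w) / (Fintype.card V : ℝ)) * sgnInd f v

lemma sgn_mul_abs {V : Type*} (f : V → ℝ) (v : V) (h : f v ≠ 0) :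
    f v * sgnInd f v = |f v| := by
  unfold sgnInd
  rcases lt_trichotomy (f v) 0 with hlt | heq | hgt
  · rw [if_neg (by linarith), if_pos hlt, abs_of_neg hlt]; ring
  · exact absurd heq h
  · rw [if_pos hgt, abs_of_pos hgt]; ring

lemma sgn_sq_one {V : Type*} (f : V → ℝ) (v : V) (h : f v ≠ 0) :
    sgnInd f v ^ 2 = 1 := by
  unfold sgnInd
  rcases lt_trichotomy (f v) 0 with hlt | heq | hgt
  · rw [if_neg (by linarith), if_pos hlt]; ring
  · exact absurd heq h
  · rw [if_pos hgt]; ring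

/-- Decomposition lemma: for a nowhere-zero eigenfunction `f` of `T` with eigenvalue
`d·μ`, orthogonal to `1_V`, with `κ = (1+μ)/(1-μ₂) ∈ (0,1)`, the components
`f_str` and `f_sml = f - f_str` satisfy `‖f_sml‖₂ ≤ √κ ‖f‖₂` and
`‖f_str‖₂ ≥ √(1-κ) ‖f‖₂`. -/
theorem decomposition_str_sml {V : Type*} [Fintype V] (hV : 2 ≤ Fintype.card V)
    (a : V → V → ℝ) (hsym : ∀ u v, a u v = a v u) (hnn : ∀ u v, 0 ≤ a u v)
    (hint : ∀ u v, ∃ k : ℕ, a u v = k)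
    (d μ μ₂ : ℝ) (hd : 0 < d) (hrow : ∀ u, ∑ v, a u v = d)
    (hray : ∀ g : V → ℝ, (∑ v, g v) = 0 →
      (∑ u, ∑ v, a u v * g u * g v) ≤ d * μ₂ * ∑ v, g v ^ 2)
    (hμ₂ : μ₂ ≠ 1)
    (f : V → ℝ) (heig : ∀ u, ∑ v, a u v * f v = d * μ * f u)
    (horth : (∑ v, f v) = 0) (hnz : ∀ v, f v ≠ 0)
    (hκ : 0 < (1 + μ) / (1 - μ₂) ∧ (1 + μ) / (1 - μ₂) < 1) :
    Real.sqrt (∑ v, (f v - fStr f v) ^ 2) ≤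
        Real.sqrt ((1 + μ) / (1 - μ₂)) * Real.sqrt (∑ v, f v ^ 2) ∧
      Real.sqrt (∑ v, fStr f v ^ 2) ≥
        Real.sqrt (1 - (1 + μ) / (1 - μ₂)) * Real.sqrt (∑ v, f v ^ 2) := by
  classical
  have hpos : 0 < Fintype.card V := lt_of_lt_of_le (by norm_num) hV
  have hne : Nonempty V := Fintype.card_pos_iff.mp hpos
  set n : ℝ := (Fintype.card V : ℝ) with hn_def
  have hn : 0 < n := by
    rw [hn_def]
    exact_mod_cast hpos
  set s : ℝ := ∑ v, |f v| with hs_def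
  set F : ℝ := ∑ v, f v ^ 2 with hF_def
  have hS : ∑ w, f w * sgnInd f w = s := by
    refine Finset.sum_congr rfl fun w _ => sgn_mul_abs f w (hnz w)
  have hF : 0 < F := by
    obtain ⟨v⟩ := hne
    refine Finset.sum_pos' (fun i _ => sq_nonneg _) ⟨v, Finset.mem_univ v, ?_⟩
    exact pow_pos (abs_pos.mpr (hnz v)) 2 |>.trans_le (by rw [sq_abs])
  have hcol : ∀ v, ∑ u, a u v = d := by
    intro v
    rw [show (∑ u, a u v) = ∑ u, a v u from Finset.sum_congr rfl fun u _ => hsym u v]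
    exact hrow v
  -- eigen double sum
  have hTf : ∑ u, ∑ v, a u v * f u * f v = d * μ * F := by
    have h1 : ∀ u, ∑ v, a u v * f u * f v = f u * (d * μ * f u) := by
      intro u
      rw [← heig u, Finset.mul_sum]
      exact Finset.sum_congr rfl fun v _ => by ring
    rw [Finset.sum_congr rfl fun u _ => h1 u, hF_def, Finset.mul_sum]
    exact Finset.sum_congr rfl fun u _ => by ring
  -- double sums of row-type
  have hrowsum : ∀ g : V → ℝ, ∑ u, ∑ v, a u v * g u = d * ∑ u, g u := by
    intro g
    rw [Finset.mul_sum]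
    refine Finset.sum_congr rfl fun u _ => ?_
    rw [← Finset.sum_mul, hrow u]
  have hcolsum : ∀ g : V → ℝ, ∑ u, ∑ v, a u v * g v = d * ∑ v, g v := by
    intro g
    rw [Finset.sum_comm, Finset.mul_sum]
    refine Finset.sum_congr rfl fun v _ => ?_
    rw [← Finset.sum_mul, hcol v]
  have htot : ∑ u, ∑ v, a u v = n * d := by
    rw [Finset.sum_congr rfl fun u (_ : u ∈ univ) => hrow u, Finset.sum_const,
      Finset.card_univ, nsmul_eq_mul, ← hn_def]
  -- μ ≥ -1
  have hquad : 0 ≤ ∑ u, ∑ v, a u v * (f u + f v) ^ 2 :=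
    Finset.sum_nonneg fun u _ => Finset.sum_nonneg fun v _ => mul_nonneg (hnn u v) (sq_nonneg _)
  have hexpand : ∑ u, ∑ v, a u v * (f u + f v) ^ 2
      = d * F + 2 * (d * μ * F) + d * F := by
    have h1 : ∑ u, ∑ v, a u v * (f u + f v) ^ 2
        = (∑ u, ∑ v, a u v * (f u)^2) + 2 * (∑ u, ∑ v, a u v * f u * f v)
          + ∑ u, ∑ v, a u v * (f v)^2 := by
      simp only [Finset.mul_sum, ← Finset.sum_add_distrib]
      exact Finset.sum_congr rfl fun u _ => Finset.sum_congr rfl fun v _ => by ring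
    rw [h1, hTf, hrowsum (fun u => (f u)^2), hcolsum (fun v => (f v)^2), ← hF_def]
  have hμge : 0 ≤ 1 + μ := by nlinarith [hquad, hexpand, mul_pos hd hF]
  have hμpos : 0 < 1 + μ := by
    rcases hμge.lt_or_eq with h | h
    · exact h
    · rw [← h] at hκ
      simp at hκ
  have hμ₂lt : 0 < 1 - μ₂ := by
    rcases div_pos_iff.mp hκ.1 with ⟨_, h⟩ | ⟨h, _⟩
    · exact h
    · linarith
  -- Rayleigh applied to g = |f| - s/n
  set c : ℝ := s / n with hc_def
  have hcn : c * n = s := by rw [hc_def]; exact div_mul_cancel₀ s hn.ne'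
  set g : V → ℝ := fun v => |f v| - c with hg_def
  have hgsum : ∑ v, g v = 0 := by
    simp only [hg_def, Finset.sum_sub_distrib, Finset.sum_const, Finset.card_univ,
      nsmul_eq_mul, ← hs_def, ← hn_def]
    rw [mul_comm, hcn]; ring
  have habs2 : ∑ v, |f v| ^ 2 = F := by
    rw [hF_def]; exact Finset.sum_congr rfl fun v _ => sq_abs _
  have hgsq : ∑ v, g v ^ 2 = F - c * s := by
    have h1 : ∀ v, g v ^ 2 = |f v|^2 - 2*c*|f v| + c^2 := fun v => by
      simp only [hg_def]; ring
    rw [Finset.sum_congr rfl fun v _ => h1 v, Finset.sum_add_distrib,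
      Finset.sum_sub_distrib, habs2, ← Finset.mul_sum, ← hs_def,
      Finset.sum_const, Finset.card_univ, nsmul_eq_mul, ← hn_def]
    linear_combination c * hcn
  set A : ℝ := ∑ u, ∑ v, a u v * |f u| * |f v| with hA_def
  have hgquad : ∑ u, ∑ v, a u v * g u * g v = A - d * (c * s) := by
    have h1 : ∑ u, ∑ v, a u v * g u * g v
        = A - c * (∑ u, ∑ v, a u v * |f u|) - c * (∑ u, ∑ v, a u v * |f v|)
          + c^2 * (∑ u, ∑ v, a u v) := by
      rw [hA_def]
      simp only [Finset.mul_sum, ← Finset.sum_sub_distrib, ← Finset.sum_add_distrib]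
      exact Finset.sum_congr rfl fun u _ => Finset.sum_congr rfl fun v _ => by
        simp only [hg_def]; ring
    rw [h1, hrowsum (fun u => |f u|), hcolsum (fun v => |f v|), ← hs_def, htot]
    linear_combination (d * c) * hcn
  have hA_lb : -(d * μ * F) ≤ A := by
    have h0 : 0 ≤ ∑ u, ∑ v, a u v * (|f u| * |f v| + f u * f v) := by
      refine Finset.sum_nonneg fun u _ => Finset.sum_nonneg fun v _ => ?_
      refine mul_nonneg (hnn u v) ?_
      have := neg_abs_le (f u * f v)
      rw [abs_mul] at this
      linarith
    have hsplit : ∑ u, ∑ v, a u v * (|f u| * |f v| + f u * f v)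
        = A + ∑ u, ∑ v, a u v * f u * f v := by
      rw [hA_def, ← Finset.sum_add_distrib]
      refine Finset.sum_congr rfl fun u _ => ?_
      rw [← Finset.sum_add_distrib]
      exact Finset.sum_congr rfl fun v _ => by ring
    rw [hsplit, hTf] at h0
    linarith
  have hrg := hray g hgsum
  rw [hgquad, hgsq] at hrg
  -- key inequality: (1-κ) F ≤ c * s  (note c * s = s²/n)
  have hkey : (1 - (1 + μ) / (1 - μ₂)) * F ≤ c * s := by
    have h0 : d * (-(μ + μ₂) * F) ≤ d * ((1 - μ₂) * (c * s)) := by nlinarith [hA_lb, hrg]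
    have h1 : -(μ + μ₂) * F ≤ (1 - μ₂) * (c * s) := (mul_le_mul_iff_right₀ hd).mp h0
    have h2 : 1 - (1 + μ) / (1 - μ₂) = -(μ + μ₂) / (1 - μ₂) := by
      field_simp
      ring
    rw [h2, div_mul_eq_mul_div, div_le_iff₀ hμ₂lt]
    linarith [h1]
  -- compute the two sums
  have hstr : ∀ v, fStr f v = c * sgnInd f v := by
    intro v; unfold fStr; rw [hS]
  have hsgn_sum : ∑ v, sgnInd f v ^ 2 = n := by
    rw [Finset.sum_congr rfl fun v (_ : v ∈ univ) => sgn_sq_one f v (hnz v),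
      Finset.sum_const, Finset.card_univ, nsmul_eq_mul, mul_one, ← hn_def]
  have hsum_str : ∑ v, fStr f v ^ 2 = c * s := by
    have h1 : ∀ v, fStr f v ^ 2 = c^2 * sgnInd f v ^ 2 := fun v => by
      rw [hstr v]; ring
    rw [Finset.sum_congr rfl fun v _ => h1 v, ← Finset.mul_sum, hsgn_sum]
    linear_combination c * hcn
  have hsum_sml : ∑ v, (f v - fStr f v) ^ 2 = F - c * s := by
    have h1 : ∀ v, (f v - fStr f v) ^ 2
        = f v ^ 2 - 2 * c * |f v| + c^2 * sgnInd f v ^ 2 := by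
      intro v
      rw [hstr v, ← sgn_mul_abs f v (hnz v)]
      ring
    rw [Finset.sum_congr rfl fun v _ => h1 v, Finset.sum_add_distrib,
      Finset.sum_sub_distrib, ← hF_def, ← Finset.mul_sum, ← hs_def,
      ← Finset.mul_sum, hsgn_sum]
    linear_combination c * hcn
  clear_value A g c F s n
  have hκnn : 0 ≤ (1 + μ) / (1 - μ₂) := le_of_lt hκ.1
  have h1κnn : 0 ≤ 1 - (1 + μ) / (1 - μ₂) := by linarith [hκ.2]
  constructor
  · rw [hsum_sml, ← Real.sqrt_mul hκnn]
    apply Real.sqrt_le_sqrt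
    nlinarith [hkey]  -- F - c*s ≤ κ * F
  · rw [hsum_str, ← Real.sqrt_mul h1κnn]
    exact Real.sqrt_le_sqrt hkey
end

section
/- Under the hypotheses of the decomposition lemma with κ ∈ (0, 1/5], the support sizes satisfy |supp(f₊)| ≤ ((1+ς)/2) n and |supp(f₋)| ≥ ((1-ς)/2) n, where ς = √κ/√(1-κ), assuming additionally |supp(f₊)| ≥ |supp(f₋)|. -/
open Finset

set_option maxHeartbeats 1000000 in
/-- Under the hypotheses of the decomposition lemma with `κ ∈ (0, 1/5]` and
`|supp(f₊)| ≥ |supp(f₋)|`, the support sizes satisfy `|supp(f₊)| ≤ ((1+ς)/2)n` and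
`|supp(f₋)| ≥ ((1-ς)/2)n`, with `ς = √κ/√(1-κ)`. -/
theorem support_size_bounds {V : Type*} [Fintype V]
    (hV : 2 ≤ Fintype.card V)
    (a : V → V → ℝ) (hsym : ∀ u v, a u v = a v u) (hnn : ∀ u v, 0 ≤ a u v)
    (d μ μ₂ : ℝ) (hd : 0 < d) (hrow : ∀ u, ∑ v, a u v = d)
    (hray : ∀ g : V → ℝ, (∑ v, g v) = 0 →
      (∑ u, ∑ v, a u v * g u * g v) ≤ d * μ₂ * ∑ v, g v ^ 2)
    (hμ₂ : μ₂ ≠ 1)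
    (f : V → ℝ) (heig : ∀ u, ∑ v, a u v * f v = d * μ * f u)
    (horth : (∑ v, f v) = 0) (hnz : ∀ v, f v ≠ 0)
    (hκ : 0 < (1 + μ) / (1 - μ₂) ∧ (1 + μ) / (1 - μ₂) ≤ 1 / 5)
    (hsupp : (Finset.univ.filter fun v => f v < 0).card ≤
      (Finset.univ.filter fun v => 0 < f v).card) :
    ((Finset.univ.filter fun v => 0 < f v).card : ℝ) ≤
        ((1 + Real.sqrt ((1 + μ) / (1 - μ₂)) / Real.sqrt (1 - (1 + μ) / (1 - μ₂))) / 2) *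
          (Fintype.card V : ℝ) ∧
      ((Finset.univ.filter fun v => f v < 0).card : ℝ) ≥
        ((1 - Real.sqrt ((1 + μ) / (1 - μ₂)) / Real.sqrt (1 - (1 + μ) / (1 - μ₂))) / 2) *
          (Fintype.card V : ℝ) := by
  classical
  set κ := (1 + μ) / (1 - μ₂) with hκdef
  set n : ℝ := (Fintype.card V : ℝ) with hndef
  have hn : 0 < n := by
    have h0 : 0 < Fintype.card V := by omega
    rw [hndef]
    exact_mod_cast h0
  have : Nonempty V := Fintype.card_pos_iff.mp (by omega)
  set s := sgnInd f with hsdef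
  have hfs : ∀ v, f v * s v = |f v| := by
    intro v
    rcases lt_or_gt_of_ne (hnz v) with h | h
    · simp [hsdef, sgnInd, h, not_lt.mpr h.le, abs_of_neg h]
    · simp [hsdef, sgnInd, h, abs_of_pos h]
  have hs2 : ∀ v, s v ^ 2 = 1 := by
    intro v
    rcases lt_or_gt_of_ne (hnz v) with h | h
    · simp [hsdef, sgnInd, h, not_lt.mpr h.le]
    · simp [hsdef, sgnInd, h]
  set F2 := ∑ v, f v ^ 2 with hF2def
  set S := ∑ v, |f v| with hSdef
  have hne : (Finset.univ : Finset V).Nonempty := univ_nonempty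
  have hF2 : 0 < F2 := by
    obtain ⟨v, _⟩ := hne
    have hv : 0 < f v ^ 2 := sq_pos_of_ne_zero (hnz v)
    exact Finset.sum_pos' (fun i _ => by positivity) ⟨v, mem_univ v, hv⟩
  have hSpos : 0 < S :=
    Finset.sum_pos' (fun i _ => abs_nonneg _)
      ⟨hne.choose, mem_univ _, abs_pos.mpr (hnz hne.choose)⟩
  set c := S / n with hcdef
  have hc : 0 < c := div_pos hSpos hn
  have hSn : S = n * c := by rw [hcdef, mul_div_assoc', mul_div_cancel_left₀ S hn.ne']
  have hcol : ∀ v, ∑ u, a u v = d := by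
    intro v
    calc ∑ u, a u v = ∑ u, a v u := by simp_rw [fun u => hsym u v]
    _ = d := hrow v
  -- ⟨Af, f⟩ = dμ F2
  have hAff : ∑ u, ∑ v, a u v * f u * f v = d * μ * F2 := by
    calc ∑ u, ∑ v, a u v * f u * f v
        = ∑ u, f u * ∑ v, a u v * f v := by
          refine Finset.sum_congr rfl fun u _ => ?_
          rw [Finset.mul_sum]; exact Finset.sum_congr rfl fun v _ => by ring
    _ = ∑ u, f u * (d * μ * f u) := by simp_rw [heig]
    _ = d * μ * F2 := by
          rw [hF2def, Finset.mul_sum]; exact Finset.sum_congr rfl fun u _ => by ring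
  have hAf2 : ∑ u, ∑ v, a u v * f u ^ 2 = d * F2 := by
    calc ∑ u, ∑ v, a u v * f u ^ 2 = ∑ u, (∑ v, a u v) * f u ^ 2 := by
          exact Finset.sum_congr rfl fun u _ => (Finset.sum_mul ..).symm
    _ = d * F2 := by simp_rw [hrow]; rw [hF2def, Finset.mul_sum]
  have hAf2' : ∑ u, ∑ v, a u v * f v ^ 2 = d * F2 := by
    rw [Finset.sum_comm]
    calc ∑ v, ∑ u, a u v * f v ^ 2 = ∑ v, (∑ u, a u v) * f v ^ 2 := by
          exact Finset.sum_congr rfl fun v _ => (Finset.sum_mul ..).symm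
    _ = d * F2 := by simp_rw [hcol]; rw [hF2def, Finset.mul_sum]
  -- step B: 1 + μ > 0 and 1 - μ₂ > 0
  have hμ1' : 0 < 1 + μ := by
    have hμ1 : 0 ≤ 1 + μ := by
      have hsq : 0 ≤ ∑ u, ∑ v, a u v * (f u + f v) ^ 2 := by
        refine Finset.sum_nonneg fun u _ => Finset.sum_nonneg fun v _ => ?_
        have := hnn u v; positivity
      have hexp : ∑ u, ∑ v, a u v * (f u + f v) ^ 2
          = (∑ u, ∑ v, a u v * f u ^ 2) + 2 * (∑ u, ∑ v, a u v * f u * f v)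
            + ∑ u, ∑ v, a u v * f v ^ 2 := by
        have hpt : ∀ u v : V, a u v * (f u + f v) ^ 2
            = a u v * f u ^ 2 + 2 * (a u v * f u * f v) + a u v * f v ^ 2 :=
          fun u v => by ring
        simp_rw [hpt, Finset.sum_add_distrib, ← Finset.mul_sum]
      rw [hexp, hAf2, hAf2', hAff] at hsq
      by_contra hlt
      push_neg at hlt
      have hpos : 0 < 2 * (d * F2) := by
        have := mul_pos hd hF2; linarith
      have hneg : (1 + μ) * (2 * (d * F2)) < 0 := mul_neg_of_neg_of_pos (by linarith) hpos
      nlinarith [hsq, hneg]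
    rcases hμ1.lt_or_eq with h | h
    · exact h
    · exfalso
      have h0 : κ = 0 := by rw [hκdef, ← h]; simp
      linarith [hκ.1]
  have hμ₂' : 0 < 1 - μ₂ := by
    by_contra h
    push_neg at h
    have : κ ≤ 0 := div_nonpos_of_nonneg_of_nonpos hμ1'.le h
    linarith [hκ.1]
  have hκ1 : κ < 1 := lt_of_le_of_lt hκ.2 (by norm_num)
  have hκ0 : 0 < κ := hκ.1
  -- step C : (1 - κ) * F2 ≤ n * c ^ 2
  have hg0 : (∑ v, (|f v| - c)) = 0 := by
    rw [Finset.sum_sub_distrib, ← hSdef, Finset.sum_const, hSn, card_univ]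
    rw [hndef] at *
    push_cast
    ring
  have hg2 : ∑ v, (|f v| - c) ^ 2 = F2 - n * c ^ 2 := by
    have hpt : ∀ v, (|f v| - c) ^ 2 = f v ^ 2 - 2 * c * |f v| + c ^ 2 := by
      intro v; rw [sub_sq, sq_abs]; ring
    simp_rw [hpt]
    rw [Finset.sum_add_distrib, Finset.sum_sub_distrib, ← hF2def, ← Finset.mul_sum, ← hSdef,
      Finset.sum_const, card_univ, hSn]
    rw [hndef] at *
    push_cast
    ring
  have hrayg := hray (fun v => |f v| - c) hg0
  beta_reduce at hrayg
  rw [hg2] at hrayg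
  have e1 : ∑ u, ∑ v, a u v * (|f u| - c) = 0 := by
    have hpt : ∀ u, ∑ v, a u v * (|f u| - c) = d * (|f u| - c) := fun u => by
      rw [← Finset.sum_mul, hrow]
    simp_rw [hpt]
    rw [← Finset.mul_sum, hg0, mul_zero]
  have e2 : ∑ u, ∑ v, a u v * (|f v| - c) = 0 := by
    rw [Finset.sum_comm]
    have hpt : ∀ v, ∑ u, a u v * (|f v| - c) = d * (|f v| - c) := fun v => by
      rw [← Finset.sum_mul, hcol]
    simp_rw [hpt]
    rw [← Finset.mul_sum, hg0, mul_zero]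
  have e3 : ∑ u, ∑ v, a u v = d * n := by
    simp_rw [hrow]
    rw [Finset.sum_const, card_univ, nsmul_eq_mul, hndef]
    ring
  have hAabs : ∑ u, ∑ v, a u v * |f u| * |f v|
      = (∑ u, ∑ v, a u v * (|f u| - c) * (|f v| - c)) + c ^ 2 * (d * n) := by
    have hpt : ∀ u v, a u v * |f u| * |f v| =
        a u v * (|f u| - c) * (|f v| - c) + c * (a u v * (|f u| - c))
          + c * (a u v * (|f v| - c)) + c ^ 2 * a u v := fun u v => by ring
    simp_rw [hpt, Finset.sum_add_distrib, ← Finset.mul_sum]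
    rw [e1, e2, e3]
    ring
  have hlow : 0 ≤ d * μ * F2 + ∑ u, ∑ v, a u v * |f u| * |f v| := by
    rw [← hAff, ← Finset.sum_add_distrib]
    simp_rw [← Finset.sum_add_distrib]
    refine Finset.sum_nonneg fun u _ => Finset.sum_nonneg fun v _ => ?_
    have h1 : |a u v * f u * f v| = a u v * |f u| * |f v| := by
      rw [abs_mul, abs_mul, abs_of_nonneg (hnn u v)]
    have h2 := neg_abs_le (a u v * f u * f v)
    linarith
  have hC : (1 - κ) * F2 ≤ n * c ^ 2 := by
    have hcomb : -(d * μ * F2) ≤ d * μ₂ * (F2 - n * c ^ 2) + c ^ 2 * (d * n) := by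
      linarith [hrayg, hlow, hAabs]
    have hdiv : -(μ * F2) ≤ μ₂ * (F2 - n * c ^ 2) + c ^ 2 * n := by
      by_contra hlt
      push_neg at hlt
      have hmul := mul_lt_mul_of_pos_left hlt hd
      nlinarith [hcomb, hmul]
    have hκmul : κ * (1 - μ₂) = 1 + μ := by
      rw [hκdef]; field_simp
    have hκF2 : κ * (1 - μ₂) * F2 = (1 + μ) * F2 := by rw [hκmul]
    by_contra hlt
    push_neg at hlt
    have hmul := mul_lt_mul_of_pos_right hlt hμ₂'
    linarith [hmul, hdiv, hκF2]
  -- step D : counting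
  set P := (Finset.univ.filter fun v => 0 < f v).card with hPdef
  set N := (Finset.univ.filter fun v => f v < 0).card with hNdef
  have hPN : (P : ℝ) + N = n := by
    have hfil : (Finset.univ.filter fun v => ¬ 0 < f v)
        = Finset.univ.filter fun v => f v < 0 := by
      ext v
      simp only [mem_filter, mem_univ, true_and, not_lt]
      exact ⟨fun h => lt_of_le_of_ne h (hnz v), le_of_lt⟩
    have h2 := Finset.card_filter_add_card_filter_not
      (s := (Finset.univ : Finset V)) (p := fun v => 0 < f v)
    rw [hfil] at h2
    rw [hndef, ← Finset.card_univ]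
    exact_mod_cast h2
  have hsum_s : ∑ v, s v = (P : ℝ) - N := by
    have hpt : ∀ v, s v = (if 0 < f v then (1:ℝ) else 0) - (if f v < 0 then (1:ℝ) else 0) := by
      intro v
      rcases lt_or_gt_of_ne (hnz v) with h | h
      · simp [hsdef, sgnInd, h, not_lt.mpr h.le]
      · simp [hsdef, sgnInd, h, not_lt.mpr h.le]
    simp_rw [hpt]
    rw [Finset.sum_sub_distrib, Finset.sum_boole, Finset.sum_boole]
  have hfssum : ∑ v, f v * s v = S := by simp_rw [hfs]; rw [hSdef]
  have hsml2 : ∑ v, (f v - c * s v) ^ 2 = F2 - n * c ^ 2 := by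
    have hpt : ∀ v, (f v - c * s v) ^ 2
        = f v ^ 2 - 2 * c * (f v * s v) + c ^ 2 * s v ^ 2 := fun v => by ring
    simp_rw [hpt, hs2]
    rw [Finset.sum_add_distrib, Finset.sum_sub_distrib, ← hF2def, ← Finset.mul_sum, hfssum,
      Finset.sum_const, card_univ, hSn]
    rw [hndef] at *
    push_cast
    ring
  have hinner : ∑ v, (f v - c * s v) = -(c * ((P : ℝ) - N)) := by
    rw [Finset.sum_sub_distrib, horth, ← Finset.mul_sum, hsum_s]
    ring
  have hCS : (c * ((P : ℝ) - N)) ^ 2 ≤ (F2 - n * c ^ 2) * n := by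
    have h := Finset.sum_mul_sq_le_sq_mul_sq Finset.univ (fun v => f v - c * s v)
      (fun _ => (1 : ℝ))
    simp only [mul_one, one_pow] at h
    rw [hinner, hsml2] at h
    rw [Finset.sum_const, card_univ, nsmul_eq_mul, mul_one] at h
    calc (c * ((P : ℝ) - N)) ^ 2 = (-(c * ((P : ℝ) - N))) ^ 2 := by ring
    _ ≤ (F2 - n * c ^ 2) * n := by rw [← hndef] at h; exact h
  have hD : ((P : ℝ) - N) ^ 2 ≤ κ / (1 - κ) * n ^ 2 := by
    rw [div_mul_eq_mul_div, le_div_iff₀ (by linarith : (0:ℝ) < 1 - κ)]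
    have key1 : (1 - κ) * F2 * (((P : ℝ) - N) ^ 2) ≤ n * c ^ 2 * (((P : ℝ) - N) ^ 2) :=
      mul_le_mul_of_nonneg_right hC (sq_nonneg _)
    have key2 : n * ((c * ((P : ℝ) - N)) ^ 2) ≤ n * ((F2 - n * c ^ 2) * n) :=
      mul_le_mul_of_nonneg_left hCS hn.le
    have hC' : F2 - n * c ^ 2 ≤ κ * F2 := by linarith [hC]
    have key3 : n * ((F2 - n * c ^ 2) * n) ≤ n * ((κ * F2) * n) :=
      mul_le_mul_of_nonneg_left (mul_le_mul_of_nonneg_right hC' hn.le) hn.le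
    by_contra hlt
    push_neg at hlt
    have hmul := mul_lt_mul_of_pos_right hlt hF2
    linarith [key1, key2, key3, hmul]
  have hPNnn : (0:ℝ) ≤ (P : ℝ) - N := by
    have : (N : ℝ) ≤ P := by exact_mod_cast hsupp
    linarith
  have hfinal : (P : ℝ) - N ≤ Real.sqrt κ / Real.sqrt (1 - κ) * n := by
    have h1 : Real.sqrt (κ / (1 - κ) * n ^ 2)
        = Real.sqrt κ / Real.sqrt (1 - κ) * n := by
      rw [Real.sqrt_mul (div_nonneg hκ0.le (by linarith)), Real.sqrt_sq hn.le, Real.sqrt_div hκ0.le]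
    calc (P : ℝ) - N = Real.sqrt (((P : ℝ) - N) ^ 2) := (Real.sqrt_sq hPNnn).symm
    _ ≤ Real.sqrt (κ / (1 - κ) * n ^ 2) := Real.sqrt_le_sqrt hD
    _ = _ := h1
  constructor
  · linarith
  · rw [ge_iff_le]
    linarith
end

section
/- Under the hypotheses of the decomposition lemma with κ ∈ (0, 1/5] and |supp(f₊)| ≥ |supp(f₋)|, the inequality ‖f₊‖₂² ≤ ((1 + ς + κ + 2√2·√κ)/2) ‖f‖₂² holds, where ς = √κ/√(1-κ) and f₊ = max(f,0). -/
open Finset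

set_option maxHeartbeats 1000000 in
/-- Under the hypotheses of the decomposition lemma with `κ ∈ (0, 1/5]` and
`|supp(f₊)| ≥ |supp(f₋)|`, one has
`‖f₊‖₂² ≤ ((1 + ς + κ + 2√2·√κ)/2)‖f‖₂²`, where `ς = √κ/√(1-κ)`. -/
theorem fplus_norm_sq_upper {V : Type*} [Fintype V]
    (hV : 2 ≤ Fintype.card V)
    (a : V → V → ℝ) (hsym : ∀ u v, a u v = a v u) (hnn : ∀ u v, 0 ≤ a u v)
    (d μ μ₂ : ℝ) (hd : 0 < d) (hrow : ∀ u, ∑ v, a u v = d)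
    (hray : ∀ g : V → ℝ, (∑ v, g v) = 0 →
      (∑ u, ∑ v, a u v * g u * g v) ≤ d * μ₂ * ∑ v, g v ^ 2)
    (hμ₂ : μ₂ ≠ 1)
    (f : V → ℝ) (heig : ∀ u, ∑ v, a u v * f v = d * μ * f u)
    (horth : (∑ v, f v) = 0) (hnz : ∀ v, f v ≠ 0)
    (hκ : 0 < (1 + μ) / (1 - μ₂) ∧ (1 + μ) / (1 - μ₂) ≤ 1 / 5)
    (hsupp : (Finset.univ.filter fun v => f v < 0).card ≤
      (Finset.univ.filter fun v => 0 < f v).card) :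
    (∑ v, max (f v) 0 ^ 2) ≤
      ((1 + Real.sqrt ((1 + μ) / (1 - μ₂)) / Real.sqrt (1 - (1 + μ) / (1 - μ₂)) +
            (1 + μ) / (1 - μ₂) +
            2 * Real.sqrt 2 * Real.sqrt ((1 + μ) / (1 - μ₂))) / 2) *
        ∑ v, f v ^ 2 := by
  classical
  obtain ⟨hκpos, hκle⟩ := hκ
  set κ := (1 + μ) / (1 - μ₂) with hκdef
  have hn2 : (2:ℝ) ≤ (Fintype.card V : ℝ) := by exact_mod_cast hV
  have hnpos : (0:ℝ) < (Fintype.card V : ℝ) := by linarith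
  set F := ∑ v, f v ^ 2 with hFdef
  have hFpos : 0 < F := by
    have hne : Nonempty V := Fintype.card_pos_iff.mp (by omega)
    obtain ⟨v⟩ := hne
    refine Finset.sum_pos' (fun i _ => sq_nonneg _) ⟨v, Finset.mem_univ v, ?_⟩
    have : f v ^ 2 = |f v| ^ 2 := (sq_abs _).symm
    rw [this]
    exact pow_pos (abs_pos.mpr (hnz v)) 2
  have hcol : ∀ v, ∑ u, a u v = d := fun v => by
    rw [Finset.sum_congr rfl fun u _ => hsym u v]; exact hrow v
  have htot : ∑ u, ∑ v, a u v = (Fintype.card V : ℝ) * d := by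
    rw [Finset.sum_congr rfl fun u _ => hrow u, Finset.sum_const, nsmul_eq_mul, Finset.card_univ]
  have hDS : ∀ φ : V → ℝ, ∑ u, ∑ v, a u v * φ v = d * ∑ v, φ v := by
    intro φ
    rw [Finset.sum_comm, Finset.mul_sum]
    refine Finset.sum_congr rfl fun v _ => ?_
    rw [← Finset.sum_mul, hcol]
  have hDS' : ∀ φ : V → ℝ, ∑ u, ∑ v, a u v * φ u = d * ∑ u, φ u := by
    intro φ
    rw [Finset.mul_sum]
    refine Finset.sum_congr rfl fun u _ => ?_
    rw [← Finset.sum_mul, hrow]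
  have hQf : ∑ u, ∑ v, a u v * f u * f v = d * μ * F := by
    have hstep : ∀ u, ∑ v, a u v * f u * f v = d * μ * f u ^ 2 := fun u => by
      calc ∑ v, a u v * f u * f v = f u * ∑ v, a u v * f v := by
            rw [Finset.mul_sum]; exact Finset.sum_congr rfl fun v _ => by ring
        _ = f u * (d * μ * f u) := by rw [heig]
        _ = d * μ * f u ^ 2 := by ring
    rw [Finset.sum_congr rfl fun u _ => hstep u, ← Finset.mul_sum]
  -- 1 + μ ≥ 0
  have hμ1 : 0 ≤ 1 + μ := by
    have hEnn : 0 ≤ ∑ u, ∑ v, a u v * (f u + f v)^2 :=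
      Finset.sum_nonneg fun u _ => Finset.sum_nonneg fun v _ =>
        mul_nonneg (hnn u v) (sq_nonneg _)
    have hmid : ∑ u, ∑ v, 2 * (a u v * f u * f v) = 2 * (d * μ * F) := by
      simp_rw [← Finset.mul_sum]
      rw [hQf]
    have hEeq : ∑ u, ∑ v, a u v * (f u + f v)^2 = d * F + 2 * (d * μ * F) + d * F := by
      calc ∑ u, ∑ v, a u v * (f u + f v)^2
          = ∑ u, ∑ v, (a u v * f u ^ 2 + 2 * (a u v * f u * f v) + a u v * f v ^ 2) :=
            Finset.sum_congr rfl fun u _ => Finset.sum_congr rfl fun v _ => by ring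
        _ = (∑ u, ∑ v, a u v * f u ^ 2) + (∑ u, ∑ v, 2 * (a u v * f u * f v))
              + (∑ u, ∑ v, a u v * f v ^ 2) := by
            simp [Finset.sum_add_distrib]
        _ = d * F + 2 * (d * μ * F) + d * F := by
            rw [hDS' (fun u => f u ^ 2), hDS (fun v => f v ^ 2), hmid, ← hFdef]
    rw [hEeq] at hEnn
    nlinarith [mul_pos hd hFpos]
  have hμ₂pos : 0 < 1 - μ₂ := by
    rcases lt_trichotomy μ₂ 1 with h | h | h
    · linarith
    · exact absurd h hμ₂
    · exfalso
      rcases div_pos_iff.mp hκpos with ⟨h1, h2⟩ | ⟨h1, h2⟩ <;> linarith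
  -- decomposition: define alpha and g
  set α : ℝ := (∑ w, |f w|) / (Fintype.card V : ℝ) with hαdef
  have hαnn : 0 ≤ α := div_nonneg (Finset.sum_nonneg fun v _ => abs_nonneg _) hnpos.le
  set g : V → ℝ := fun v => |f v| - α with hgdef
  have hgabs : ∀ v, |f v| = g v + α := fun v => by simp [hgdef]
  have hg0 : ∑ v, g v = 0 := by
    simp only [hgdef]
    rw [Finset.sum_sub_distrib, Finset.sum_const, nsmul_eq_mul, hαdef]
    field_simp
    rw [Finset.card_univ]; ring
  set G := ∑ v, g v ^ 2 with hGdef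
  have hsq : ∀ v, f v ^ 2 = g v ^ 2 + 2 * α * g v + α ^ 2 := fun v => by
    have h1 : f v ^ 2 = |f v| ^ 2 := (sq_abs _).symm
    rw [h1, hgabs v]; ring
  have hFG : F = G + (Fintype.card V : ℝ) * α ^ 2 := by
    rw [hFdef, Finset.sum_congr rfl fun v _ => hsq v, Finset.sum_add_distrib,
      Finset.sum_add_distrib, ← Finset.mul_sum, hg0, Finset.sum_const, nsmul_eq_mul, Finset.card_univ]
    rw [← hGdef]; ring
  have hQabs : ∑ u, ∑ v, a u v * |f u| * |f v|
      = (∑ u, ∑ v, a u v * g u * g v) + (Fintype.card V : ℝ) * d * α ^ 2 := by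
    calc ∑ u, ∑ v, a u v * |f u| * |f v|
        = ∑ u, ∑ v, (a u v * g u * g v + α * (a u v * g u) + α * (a u v * g v)
            + α ^ 2 * a u v) :=
          Finset.sum_congr rfl fun u _ => Finset.sum_congr rfl fun v _ => by
            rw [hgabs u, hgabs v]; ring
      _ = (∑ u, ∑ v, a u v * g u * g v) + (∑ u, ∑ v, α * (a u v * g u))
            + (∑ u, ∑ v, α * (a u v * g v)) + (∑ u, ∑ v, α ^ 2 * a u v) := by
          simp [Finset.sum_add_distrib]
      _ = (∑ u, ∑ v, a u v * g u * g v) + (Fintype.card V : ℝ) * d * α ^ 2 := by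
          simp_rw [← Finset.mul_sum]
          rw [hDS' g, hDS g, hg0, htot]; ring
  have hlow : -(d * μ * F) ≤ ∑ u, ∑ v, a u v * |f u| * |f v| := by
    rw [← hQf]
    have hneg : -(∑ u, ∑ v, a u v * f u * f v) = ∑ u, ∑ v, -(a u v * f u * f v) := by
      simp
    rw [hneg]
    refine Finset.sum_le_sum fun u _ => Finset.sum_le_sum fun v _ => ?_
    have h1 : 0 ≤ f u * f v + |f u| * |f v| := by
      rw [← abs_mul]; linarith [neg_abs_le (f u * f v)]
    nlinarith [mul_nonneg (hnn u v) h1]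
  have hGκ : G ≤ κ * F := by
    have h2 := hray g hg0
    rw [← hGdef] at h2
    have h3 : (Fintype.card V : ℝ) * α ^ 2 = F - G := by linarith [hFG]
    have h4 : (Fintype.card V : ℝ) * d * α ^ 2 = d * (F - G) := by
      rw [show (Fintype.card V : ℝ) * d * α ^ 2 = d * ((Fintype.card V : ℝ) * α ^ 2) by ring,
        h3]
    have H1 : -(d * μ * F) ≤ d * μ₂ * G + d * (F - G) := by
      rw [hQabs, h4] at hlow
      linarith
    rw [hκdef, div_mul_eq_mul_div, le_div_iff₀ hμ₂pos]
    nlinarith [H1, hd]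
  -- combinatorial part
  set P := Finset.univ.filter (fun v => 0 < f v) with hPdef
  set N := Finset.univ.filter (fun v => f v < 0) with hNdef
  have hNeq : Finset.univ.filter (fun v => ¬ 0 < f v) = N := by
    rw [hNdef]
    apply Finset.filter_congr
    intro v _
    constructor
    · intro h; exact lt_of_le_of_ne (not_lt.mp h) (hnz v)
    · intro h; exact not_lt.mpr h.le
  have hpart : ∀ φ : V → ℝ, ∑ v ∈ P, φ v + ∑ v ∈ N, φ v = ∑ v, φ v := fun φ => by
    rw [← hNeq, hPdef]
    exact Finset.sum_filter_add_sum_filter_not _ _ _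
  have hmax : (∑ v, max (f v) 0 ^ 2) = ∑ v ∈ P, f v ^ 2 := by
    rw [hPdef, Finset.sum_filter]
    refine Finset.sum_congr rfl fun v _ => ?_
    by_cases h : 0 < f v
    · rw [if_pos h, max_eq_left h.le]
    · rw [if_neg h, max_eq_right (not_lt.mp h)]
      norm_num
  have hfP : ∀ v ∈ P, |f v| = f v := fun v hv =>
    abs_of_pos (by simpa [hPdef] using hv)
  have hfN : ∀ v ∈ N, |f v| = -f v := fun v hv =>
    abs_of_neg (by simpa [hNdef] using hv)
  have hpm : (N.card : ℝ) ≤ (P.card : ℝ) := by exact_mod_cast hsupp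
  have hPN0 : (∑ v ∈ P, f v) + (∑ v ∈ N, f v) = 0 := (hpart f).trans horth
  have hSP : ∑ v ∈ P, g v = (∑ v ∈ P, f v) - (P.card : ℝ) * α := by
    have hstep : ∀ v ∈ P, g v = f v - α := fun v hv => by
      simp only [hgdef]; rw [hfP v hv]
    rw [Finset.sum_congr rfl hstep, Finset.sum_sub_distrib, Finset.sum_const, nsmul_eq_mul]
  have hSN : ∑ v ∈ N, g v = -(∑ v ∈ N, f v) - (N.card : ℝ) * α := by
    have hstep : ∀ v ∈ N, g v = -f v - α := fun v hv => by
      simp only [hgdef]; rw [hfN v hv]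
    rw [Finset.sum_congr rfl hstep]
    rw [Finset.sum_sub_distrib, Finset.sum_const, nsmul_eq_mul, Finset.sum_neg_distrib]
  have hDfP : ∑ v ∈ P, f v ^ 2
      = ∑ v ∈ P, g v ^ 2 + 2 * α * (∑ v ∈ P, g v) + (P.card : ℝ) * α ^ 2 := by
    rw [Finset.sum_congr rfl fun v _ => hsq v, Finset.sum_add_distrib, Finset.sum_add_distrib,
      ← Finset.mul_sum, Finset.sum_const, nsmul_eq_mul]
  have hDfN : ∑ v ∈ N, f v ^ 2
      = ∑ v ∈ N, g v ^ 2 + 2 * α * (∑ v ∈ N, g v) + (N.card : ℝ) * α ^ 2 := by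
    rw [Finset.sum_congr rfl fun v _ => hsq v, Finset.sum_add_distrib, Finset.sum_add_distrib,
      ← Finset.mul_sum, Finset.sum_const, nsmul_eq_mul]
  have hDg : (∑ v ∈ P, g v ^ 2) - (∑ v ∈ N, g v ^ 2) ≤ G := by
    have h1 := hpart (fun v => g v ^ 2)
    have h2 : 0 ≤ ∑ v ∈ N, g v ^ 2 := Finset.sum_nonneg fun v _ => sq_nonneg _
    rw [← hGdef] at h1
    linarith
  have hDf : (∑ v ∈ P, f v ^ 2) - (∑ v ∈ N, f v ^ 2)
      = (∑ v ∈ P, g v ^ 2) - (∑ v ∈ N, g v ^ 2) - ((P.card : ℝ) - (N.card : ℝ)) * α ^ 2 := by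
    rw [hDfP, hDfN, hSP, hSN]
    linear_combination (2 * α) * hPN0
  have hkey2 : (∑ v ∈ P, f v ^ 2) - (∑ v ∈ N, f v ^ 2) ≤ κ * F := by
    rw [hDf]
    have hc : 0 ≤ ((P.card : ℝ) - (N.card : ℝ)) * α ^ 2 :=
      mul_nonneg (by linarith) (sq_nonneg _)
    linarith
  have hsum2 : (∑ v ∈ P, f v ^ 2) + (∑ v ∈ N, f v ^ 2) = F := hpart _
  have hfinal : ∑ v ∈ P, f v ^ 2 ≤ (1 + κ) / 2 * F := by linarith
  rw [hmax]
  have hς : 0 ≤ Real.sqrt κ / Real.sqrt (1 - κ) :=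
    div_nonneg (Real.sqrt_nonneg _) (Real.sqrt_nonneg _)
  have hrt : 0 ≤ 2 * Real.sqrt 2 * Real.sqrt κ := by positivity
  nlinarith [mul_nonneg hς hFpos.le, mul_nonneg hrt hFpos.le, hfinal]
end

section
/- Under the hypotheses of the decomposition lemma with κ ∈ (0, 1/3], the inequality ‖f₊‖₂ ≥ ϑ ‖f‖₂ holds, where ϑ = (1/√2)√(1-κ) − √κ and f₊ = max(f,0). Consequently ‖f₋‖₂ ≤ √(1-ϑ²) ‖f‖₂. -/
open Finset

set_option maxHeartbeats 1600000 in
/-- Under the hypotheses of the decomposition lemma with `κ ∈ (0, 1/3]` and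
`|supp(f₊)| ≥ |supp(f₋)|`, one has `‖f₊‖₂ ≥ ϑ‖f‖₂` where
`ϑ = (1/√2)√(1-κ) − √κ`, and consequently `‖f₋‖₂ ≤ √(1-ϑ²)‖f‖₂`. -/
theorem fplus_norm_lower {V : Type*} [Fintype V]
    (hV : 2 ≤ Fintype.card V)
    (a : V → V → ℝ) (hsym : ∀ u v, a u v = a v u) (hnn : ∀ u v, 0 ≤ a u v)
    (d μ μ₂ : ℝ) (hd : 0 < d) (hrow : ∀ u, ∑ v, a u v = d)
    (hray : ∀ g : V → ℝ, (∑ v, g v) = 0 →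
      (∑ u, ∑ v, a u v * g u * g v) ≤ d * μ₂ * ∑ v, g v ^ 2)
    (hμ₂ : μ₂ ≠ 1)
    (f : V → ℝ) (heig : ∀ u, ∑ v, a u v * f v = d * μ * f u)
    (horth : (∑ v, f v) = 0) (hnz : ∀ v, f v ≠ 0)
    (hκ : 0 < (1 + μ) / (1 - μ₂) ∧ (1 + μ) / (1 - μ₂) ≤ 1 / 3)
    (hsupp : (Finset.univ.filter fun v => f v < 0).card ≤
      (Finset.univ.filter fun v => 0 < f v).card) :
    Real.sqrt (∑ v, max (f v) 0 ^ 2) ≥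
        ((1 / Real.sqrt 2) * Real.sqrt (1 - (1 + μ) / (1 - μ₂)) -
            Real.sqrt ((1 + μ) / (1 - μ₂))) *
          Real.sqrt (∑ v, f v ^ 2) ∧
      Real.sqrt (∑ v, max (-f v) 0 ^ 2) ≤
        Real.sqrt (1 - ((1 / Real.sqrt 2) * Real.sqrt (1 - (1 + μ) / (1 - μ₂)) -
            Real.sqrt ((1 + μ) / (1 - μ₂))) ^ 2) *
          Real.sqrt (∑ v, f v ^ 2) := by
  set κ : ℝ := (1 + μ) / (1 - μ₂) with hκdef
  set S : ℝ := ∑ v, f v ^ 2 with hSdef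
  set n : ℝ := (Fintype.card V : ℝ) with hndef
  clear_value κ S n
  have hn : (0:ℝ) < n := by
    have h : 0 < Fintype.card V := by omega
    rw [hndef]; exact_mod_cast h
  have hne : Nonempty V := Fintype.card_pos_iff.mp (by omega)
  have hS : 0 < S := by
    obtain ⟨v⟩ := hne
    rw [hSdef]
    refine Finset.sum_pos' (fun w _ => sq_nonneg _) ⟨v, mem_univ v, ?_⟩
    exact pow_two_pos_of_ne_zero (hnz v)
  -- column sums
  have hcol : ∀ v, ∑ u, a u v = d := fun v => by
    simp_rw [fun u => hsym u v]; exact hrow v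
  -- quadratic form of f
  have hQf : ∑ u, ∑ v, a u v * f u * f v = d * μ * S := by
    have h1 : ∀ u, ∑ v, a u v * f u * f v = d * μ * f u ^ 2 := by
      intro u
      have : ∑ v, a u v * f u * f v = f u * ∑ v, a u v * f v := by
        rw [Finset.mul_sum]; exact Finset.sum_congr rfl fun v _ => by ring
      rw [this, heig u]; ring
    simp_rw [h1, ← Finset.mul_sum, ← hSdef]
  -- AM-GM lower bound for quadratic forms
  have amgm : ∀ g : V → ℝ, -(d * ∑ v, g v ^ 2) ≤ ∑ u, ∑ v, a u v * g u * g v := by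
    intro g
    have key : (0:ℝ) ≤ ∑ u, ∑ v, a u v * (g u + g v) ^ 2 :=
      Finset.sum_nonneg fun u _ => Finset.sum_nonneg fun v _ =>
        mul_nonneg (hnn u v) (sq_nonneg _)
    have expand : ∑ u, ∑ v, a u v * (g u + g v) ^ 2
        = (∑ u, ∑ v, a u v * g u ^ 2) + 2 * (∑ u, ∑ v, a u v * g u * g v)
          + ∑ u, ∑ v, a u v * g v ^ 2 := by
      have h : ∀ u v, a u v * (g u + g v) ^ 2
          = a u v * g u ^ 2 + 2 * (a u v * g u * g v) + a u v * g v ^ 2 :=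
        fun u v => by ring
      simp_rw [h, Finset.sum_add_distrib, ← Finset.mul_sum]
    have hrowsq : ∀ h : V → ℝ, ∑ u, ∑ v, a u v * h u ^ 2 = d * ∑ u, h u ^ 2 := by
      intro h
      have : ∀ u, ∑ v, a u v * h u ^ 2 = d * h u ^ 2 := fun u => by
        rw [← Finset.sum_mul, hrow u]
      simp_rw [this, ← Finset.mul_sum]
    have hcolsq : ∑ u, ∑ v, a u v * g v ^ 2 = d * ∑ v, g v ^ 2 := by
      rw [Finset.sum_comm]
      have : ∀ v, ∑ u, a u v * g v ^ 2 = d * g v ^ 2 := fun v => by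
        rw [← Finset.sum_mul, hcol v]
      simp_rw [this, ← Finset.mul_sum]
    rw [expand, hrowsq g, hcolsq] at key
    linarith
  have hμge : -1 ≤ μ := by
    have h1 := amgm f
    rw [hQf, ← hSdef] at h1
    nlinarith [mul_pos hd hS]
  have h1μ : 0 < 1 + μ := by
    rcases lt_or_eq_of_le (by linarith : (0:ℝ) ≤ 1 + μ) with h | h
    · exact h
    · exfalso
      have h0 : κ = 0 := by rw [hκdef, ← h, zero_div]
      rw [h0] at hκ; exact lt_irrefl 0 hκ.1
  have h1μ₂ : 0 < 1 - μ₂ := by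
    rcases lt_trichotomy (1 - μ₂) 0 with h | h | h
    · exfalso
      have : κ < 0 := by rw [hκdef]; exact div_neg_of_pos_of_neg h1μ h
      linarith [hκ.1]
    · exfalso; rw [hκdef, h, div_zero] at hκ; linarith [hκ.1]
    · exact h
  have hκpos : 0 < κ := hκ.1
  have hκle : κ ≤ 1/3 := hκ.2
  -- the sign vector
  set s : V → ℝ := fun v => if 0 < f v then 1 else -1 with hsdef
  have hfs : ∀ v, f v * s v = |f v| := by
    intro v
    rcases (hnz v).lt_or_gt with h | h
    · simp [hsdef, not_lt.mpr h.le, h.not_gt, abs_of_neg h]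
    · simp [hsdef, h, abs_of_pos h]
  have hs2 : ∀ v, s v ^ 2 = 1 := by
    intro v; rcases (hnz v).lt_or_gt with h | h
    · simp [hsdef, h.not_gt]
    · simp [hsdef, h]
  set c : ℝ := (∑ v, |f v|) / n with hcdef
  clear_value s c
  have hc0 : 0 ≤ c := by
    rw [hcdef]; exact div_nonneg (Finset.sum_nonneg fun v _ => abs_nonneg _) hn.le
  have hsumabs : ∑ v, |f v| = c * n := by
    rw [hcdef, div_mul_cancel₀ _ hn.ne']
  have habs2 : ∑ v, |f v| ^ 2 = S := by
    simp_rw [sq_abs, ← hSdef]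
  -- the key inequality : c^2 * n ≥ (1-κ) * S
  have hkey : (1 - κ) * S ≤ c ^ 2 * n := by
    have hg0 : ∑ v, (|f v| - c) = 0 := by
      rw [Finset.sum_sub_distrib, hsumabs, Finset.sum_const, nsmul_eq_mul, Finset.card_univ, ← hndef]
      ring
    have hgsq : ∑ v, (|f v| - c) ^ 2 = S - c ^ 2 * n := by
      have h : ∀ v : V, (|f v| - c) ^ 2 = |f v| ^ 2 - 2 * c * |f v| + c ^ 2 :=
        fun v => by ring
      simp_rw [h, Finset.sum_add_distrib, Finset.sum_sub_distrib, ← Finset.mul_sum,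
        habs2, hsumabs, Finset.sum_const, nsmul_eq_mul, Finset.card_univ, ← hndef]
      ring
    have hA1 : ∑ u, ∑ v, a u v * |f u| = d * (c * n) := by
      have h1 : ∀ u, ∑ v, a u v * |f u| = d * |f u| := fun u => by
        rw [← Finset.sum_mul, hrow u]
      simp_rw [h1]
      rw [← Finset.mul_sum, hsumabs]
    have hA2 : ∑ u, ∑ v, a u v * |f v| = d * (c * n) := by
      rw [Finset.sum_comm]
      have h1 : ∀ v, ∑ u, a u v * |f v| = d * |f v| := fun v => by
        rw [← Finset.sum_mul, hcol v]
      simp_rw [h1]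
      rw [← Finset.mul_sum, hsumabs]
    have hA3 : ∑ u : V, ∑ v : V, a u v = d * n := by
      simp_rw [hrow, Finset.sum_const, nsmul_eq_mul, Finset.card_univ, ← hndef]
      ring
    have hQabs : -(d * μ * S) ≤ ∑ u, ∑ v, a u v * |f u| * |f v| := by
      rw [← hQf, ← Finset.sum_neg_distrib]
      refine Finset.sum_le_sum fun u _ => ?_
      rw [← Finset.sum_neg_distrib]
      refine Finset.sum_le_sum fun v _ => ?_
      have h1 : -(f u * f v) ≤ |f u| * |f v| := by
        rw [← abs_mul]; exact neg_le_abs _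
      calc -(a u v * f u * f v) = a u v * (-(f u * f v)) := by ring
        _ ≤ a u v * (|f u| * |f v|) := mul_le_mul_of_nonneg_left h1 (hnn u v)
        _ = a u v * |f u| * |f v| := by ring
    have hggval : ∑ u, ∑ v, a u v * (|f u| - c) * (|f v| - c)
        = (∑ u, ∑ v, a u v * |f u| * |f v|) - d * c ^ 2 * n := by
      have h : ∀ u v, a u v * (|f u| - c) * (|f v| - c)
          = a u v * |f u| * |f v| - c * (a u v * |f u|) - c * (a u v * |f v|)
            + c ^ 2 * a u v := fun u v => by ring
      simp_rw [h, Finset.sum_add_distrib, Finset.sum_sub_distrib, ← Finset.mul_sum]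
      rw [hA1, hA2, hA3]
      ring
    have hray_g := hray (fun v => |f v| - c) hg0
    rw [hggval, hgsq] at hray_g
    have hq : -(d * μ * S) - d * c ^ 2 * n ≤ d * μ₂ * (S - c ^ 2 * n) := by
      linarith [hQabs, hray_g]
    have h2 : (-μ - μ₂) * S ≤ c ^ 2 * n * (1 - μ₂) := by nlinarith [hq, hd]
    have hκmul : κ * (1 - μ₂) = 1 + μ := by
      rw [hκdef]; field_simp
    have h3 : (1 - κ) * (1 - μ₂) = -μ - μ₂ := by
      rw [sub_mul, one_mul, hκmul]; ring
    nlinarith [h2, h1μ₂, h3]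
  -- support sizes
  set P : Finset V := univ.filter (fun v => 0 < f v) with hPdef
  clear_value P
  have hp2 : n ≤ 2 * (P.card : ℝ) := by
    have hiff : ∀ v ∈ (univ : Finset V), (f v < 0 ↔ ¬ 0 < f v) := fun v _ =>
      ⟨fun h => not_lt.mpr h.le, fun h => (hnz v).lt_or_gt.resolve_right h⟩
    have hcard : P.card + (univ.filter fun v => f v < 0).card = Fintype.card V := by
      rw [hPdef, Finset.filter_congr hiff, Finset.card_filter_add_card_filter_not,
        Finset.card_univ]
    have h2 : Fintype.card V ≤ 2 * P.card := by omega
    rw [hndef]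
    exact_mod_cast h2
  have hpn : (P.card : ℝ) ≤ n := by
    rw [hndef, hPdef]
    exact_mod_cast Finset.card_filter_le _ _
  -- the structured bound on P
  have hEbound : ∑ v ∈ P, (f v - c) ^ 2 ≤ κ * S := by
    have step1 : ∑ v ∈ P, (f v - c) ^ 2 ≤ ∑ v, (f v - c * s v) ^ 2 := by
      have hcg : ∀ v ∈ P, (f v - c) ^ 2 = (f v - c * s v) ^ 2 := by
        intro v hv
        rw [hPdef] at hv
        have hv' : 0 < f v := (Finset.mem_filter.mp hv).2
        rw [hsdef]
        simp [hv']
      rw [Finset.sum_congr rfl hcg]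
      exact Finset.sum_le_sum_of_subset_of_nonneg (Finset.subset_univ P)
        (fun v _ _ => sq_nonneg _)
    have step2 : ∑ v, (f v - c * s v) ^ 2 = S - c ^ 2 * n := by
      have h : ∀ v, (f v - c * s v) ^ 2 = f v ^ 2 - 2 * c * |f v| + c ^ 2 := by
        intro v
        calc (f v - c * s v) ^ 2
            = f v ^ 2 - 2 * c * (f v * s v) + c ^ 2 * s v ^ 2 := by ring
          _ = f v ^ 2 - 2 * c * |f v| + c ^ 2 := by rw [hfs v, hs2 v, mul_one]
      rw [Finset.sum_congr rfl fun v _ => h v, Finset.sum_add_distrib,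
        Finset.sum_sub_distrib, ← Finset.mul_sum, hsumabs, ← hSdef, Finset.sum_const,
        nsmul_eq_mul, Finset.card_univ, ← hndef]
      ring
    have h9 : S - c ^ 2 * n ≤ κ * S := by linarith only [hkey, hS]
    linarith only [step1, step2, h9]
  -- Cauchy-Schwarz on P
  have hFP0 : (0:ℝ) ≤ ∑ v ∈ P, f v ^ 2 := Finset.sum_nonneg fun v _ => sq_nonneg _
  have hsumP0 : (0:ℝ) ≤ ∑ v ∈ P, f v :=
    Finset.sum_nonneg fun v hv => by
      rw [hPdef] at hv; exact ((Finset.mem_filter.mp hv).2).le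
  have hcs : ∑ v ∈ P, f v ≤ Real.sqrt (∑ v ∈ P, f v ^ 2) * Real.sqrt (P.card : ℝ) := by
    have h1 : (∑ v ∈ P, f v) ^ 2 ≤ (∑ v ∈ P, f v ^ 2) * (P.card : ℝ) := by
      have := sum_mul_sq_le_sq_mul_sq P f (fun _ => 1)
      simpa using this
    calc ∑ v ∈ P, f v = Real.sqrt ((∑ v ∈ P, f v) ^ 2) := (Real.sqrt_sq hsumP0).symm
      _ ≤ Real.sqrt ((∑ v ∈ P, f v ^ 2) * (P.card : ℝ)) := Real.sqrt_le_sqrt h1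
      _ = Real.sqrt (∑ v ∈ P, f v ^ 2) * Real.sqrt (P.card : ℝ) :=
          Real.sqrt_mul hFP0 _
  have hpc0 : (0:ℝ) ≤ (P.card : ℝ) := Nat.cast_nonneg _
  -- (√FP - c√p)² ≤ κS
  have hEP : (Real.sqrt (∑ v ∈ P, f v ^ 2) - c * Real.sqrt (P.card : ℝ)) ^ 2 ≤ κ * S := by
    have expand : ∑ v ∈ P, (f v - c) ^ 2
        = (∑ v ∈ P, f v ^ 2) - 2 * c * (∑ v ∈ P, f v) + c ^ 2 * (P.card : ℝ) := by
      have h : ∀ v : V, (f v - c) ^ 2 = f v ^ 2 - 2 * c * f v + c ^ 2 := fun v => by ring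
      simp_rw [h, Finset.sum_add_distrib, Finset.sum_sub_distrib, ← Finset.mul_sum,
        Finset.sum_const, nsmul_eq_mul]
      ring
    have hsq1 : Real.sqrt (∑ v ∈ P, f v ^ 2) ^ 2 = ∑ v ∈ P, f v ^ 2 := Real.sq_sqrt hFP0
    have hsq2 : Real.sqrt ((P.card : ℝ)) ^ 2 = (P.card : ℝ) := Real.sq_sqrt hpc0
    have hmul : c * (∑ v ∈ P, f v)
        ≤ c * (Real.sqrt (∑ v ∈ P, f v ^ 2) * Real.sqrt (P.card : ℝ)) :=
      mul_le_mul_of_nonneg_left hcs hc0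
    nlinarith [hEbound, expand, hmul, hsq1, hsq2]
  -- A ≥ B - E
  have hEnn : 0 ≤ Real.sqrt (κ * S) := Real.sqrt_nonneg _
  have hEsq : Real.sqrt (κ * S) ^ 2 = κ * S :=
    Real.sq_sqrt (mul_nonneg hκpos.le hS.le)
  have hABE : c * Real.sqrt (P.card : ℝ) - Real.sqrt (κ * S)
      ≤ Real.sqrt (∑ v ∈ P, f v ^ 2) := by
    nlinarith [hEP, hEnn, hEsq, Real.sqrt_nonneg (∑ v ∈ P, f v ^ 2)]
  have h1k : (0:ℝ) ≤ 1 - κ := by linarith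
  -- B ≥ √((1-κ)S)/√2
  have hB : Real.sqrt ((1 - κ) * S) / Real.sqrt 2 ≤ c * Real.sqrt (P.card : ℝ) := by
    have h1 : (1 - κ) * S / 2 ≤ c ^ 2 * (P.card : ℝ) := by
      nlinarith [hkey, hp2, sq_nonneg c]
    calc Real.sqrt ((1 - κ) * S) / Real.sqrt 2
        = Real.sqrt ((1 - κ) * S / 2) := (Real.sqrt_div (by positivity) 2).symm
      _ ≤ Real.sqrt (c ^ 2 * (P.card : ℝ)) := Real.sqrt_le_sqrt h1
      _ = c * Real.sqrt (P.card : ℝ) := by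
          rw [Real.sqrt_mul (sq_nonneg c), Real.sqrt_sq hc0]
  -- main lower bound
  have e1 : Real.sqrt ((1 - κ) * S) = Real.sqrt (1 - κ) * Real.sqrt S :=
    Real.sqrt_mul h1k S
  have e2 : Real.sqrt (κ * S) = Real.sqrt κ * Real.sqrt S :=
    Real.sqrt_mul hκpos.le S
  have hmain : (1 / Real.sqrt 2 * Real.sqrt (1 - κ) - Real.sqrt κ) * Real.sqrt S
      ≤ Real.sqrt (∑ v ∈ P, f v ^ 2) := by
    have : (1 / Real.sqrt 2 * Real.sqrt (1 - κ) - Real.sqrt κ) * Real.sqrt S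
        = Real.sqrt ((1 - κ) * S) / Real.sqrt 2 - Real.sqrt (κ * S) := by
      rw [e1, e2]; ring
    rw [this]
    linarith [hB, hABE]
  -- identify ∑ max f 0 ^ 2 with the sum over P
  have hmaxP : ∑ v, max (f v) 0 ^ 2 = ∑ v ∈ P, f v ^ 2 := by
    rw [hPdef, Finset.sum_filter]
    refine Finset.sum_congr rfl fun v _ => ?_
    rcases lt_or_ge 0 (f v) with h | h
    · rw [max_eq_left h.le, if_pos h]
    · rw [max_eq_right h, if_neg (not_lt.mpr h)]
      ring
  have hθ0 : 0 ≤ 1 / Real.sqrt 2 * Real.sqrt (1 - κ) - Real.sqrt κ := by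
    have h4 : Real.sqrt κ ≤ Real.sqrt ((1 - κ) / 2) := Real.sqrt_le_sqrt (by linarith)
    have h5 : Real.sqrt ((1 - κ) / 2) = Real.sqrt (1 - κ) / Real.sqrt 2 :=
      Real.sqrt_div h1k 2
    have h6 : Real.sqrt (1 - κ) / Real.sqrt 2 = 1 / Real.sqrt 2 * Real.sqrt (1 - κ) := by
      ring
    linarith [h4, h5.symm.trans (h5.symm ▸ h5)]
  constructor
  · rw [hmaxP]
    exact hmain
  · -- second part
    have hFPS : ∑ v ∈ P, f v ^ 2 ≤ S := by
      rw [hSdef]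
      exact Finset.sum_le_sum_of_subset_of_nonneg (Finset.subset_univ P)
        (fun v _ _ => sq_nonneg _)
    have hA2 : (1 / Real.sqrt 2 * Real.sqrt (1 - κ) - Real.sqrt κ) ^ 2 * S
        ≤ ∑ v ∈ P, f v ^ 2 := by
      have h7 := pow_le_pow_left₀ (mul_nonneg hθ0 (Real.sqrt_nonneg S)) hmain 2
      have h8 : ((1 / Real.sqrt 2 * Real.sqrt (1 - κ) - Real.sqrt κ) * Real.sqrt S) ^ 2
          = (1 / Real.sqrt 2 * Real.sqrt (1 - κ) - Real.sqrt κ) ^ 2 * S := by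
        rw [mul_pow, Real.sq_sqrt hS.le]
      rw [h8, Real.sq_sqrt hFP0] at h7
      exact h7
    have hneg : ∑ v, max (-f v) 0 ^ 2 = S - ∑ v ∈ P, f v ^ 2 := by
      have h : ∀ v : V, max (-f v) 0 ^ 2 = f v ^ 2 - max (f v) 0 ^ 2 := by
        intro v
        rcases le_total (f v) 0 with h | h
        · rw [max_eq_left (neg_nonneg.mpr h), max_eq_right h]; ring
        · rw [max_eq_right (neg_nonpos.mpr h), max_eq_left h]; ring
      simp_rw [h, Finset.sum_sub_distrib, ← hSdef, hmaxP]
    have hθ1 : (0:ℝ) ≤ 1 - (1 / Real.sqrt 2 * Real.sqrt (1 - κ) - Real.sqrt κ) ^ 2 := by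
      nlinarith [hA2, hFPS, hS]
    have h5 : S - ∑ v ∈ P, f v ^ 2
        ≤ (1 - (1 / Real.sqrt 2 * Real.sqrt (1 - κ) - Real.sqrt κ) ^ 2) * S := by
      nlinarith [hA2]
    rw [hneg]
    calc Real.sqrt (S - ∑ v ∈ P, f v ^ 2)
        ≤ Real.sqrt ((1 - (1 / Real.sqrt 2 * Real.sqrt (1 - κ) - Real.sqrt κ) ^ 2) * S) :=
          Real.sqrt_le_sqrt h5
      _ = Real.sqrt (1 - (1 / Real.sqrt 2 * Real.sqrt (1 - κ) - Real.sqrt κ) ^ 2)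
            * Real.sqrt S := Real.sqrt_mul hθ1 S
end

section
/- Under the hypotheses of the decomposition lemma, for any permutation π of V, letting I = supp(f₊) ∩ π(supp(f₊)), the inequality |⟨f₊, (π·f)₊⟩ − (|I|/n)‖f_str‖₂²| ≤ (2√(|I|/n)·√κ + κ)·‖f‖₂² holds, where (π·f)(v) = f(π⁻¹v) and g₊ = max(g,0). -/
open Finset

set_option maxHeartbeats 2000000

/-- Under the hypotheses of the decomposition lemma, for any permutation `π` of `V`,
with `I = supp(f₊) ∩ π(supp(f₊))`,
`|⟨f₊, (π·f)₊⟩ − (|I|/n)‖f_str‖₂²| ≤ (2√(|I|/n)·√κ + κ)·‖f‖₂²`. -/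
theorem correlation_translate_bound {V : Type*} [Fintype V]
    (hV : 2 ≤ Fintype.card V)
    (a : V → V → ℝ) (hsym : ∀ u v, a u v = a v u) (hnn : ∀ u v, 0 ≤ a u v)
    (d μ μ₂ : ℝ) (hd : 0 < d) (hrow : ∀ u, ∑ v, a u v = d)
    (hray : ∀ g : V → ℝ, (∑ v, g v) = 0 →
      (∑ u, ∑ v, a u v * g u * g v) ≤ d * μ₂ * ∑ v, g v ^ 2)
    (hμ₂ : μ₂ ≠ 1)
    (f : V → ℝ) (heig : ∀ u, ∑ v, a u v * f v = d * μ * f u)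
    (horth : (∑ v, f v) = 0) (hnz : ∀ v, f v ≠ 0)
    (hκ : 0 < (1 + μ) / (1 - μ₂) ∧ (1 + μ) / (1 - μ₂) < 1)
    (π : Equiv.Perm V) :
    |(∑ v, max (f v) 0 * max (f (π.symm v)) 0) -
        (((Finset.univ.filter fun v => 0 < f v ∧ 0 < f (π.symm v)).card : ℝ) /
            (Fintype.card V : ℝ)) * ∑ v, fStr f v ^ 2| ≤
      (2 * Real.sqrt (((Finset.univ.filter fun v => 0 < f v ∧ 0 < f (π.symm v)).card : ℝ) /
            (Fintype.card V : ℝ)) * Real.sqrt ((1 + μ) / (1 - μ₂)) +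
          (1 + μ) / (1 - μ₂)) *
        ∑ v, f v ^ 2 := by
  classical
  have hne : Nonempty V := Fintype.card_pos_iff.mp (by omega)
  set n : ℝ := (Fintype.card V : ℝ) with hn
  have hn0 : (0:ℝ) < n := by
    rw [hn]; exact_mod_cast lt_of_lt_of_le (by norm_num) hV
  -- sign facts
  have hsgn : ∀ v, sgnInd f v = if 0 < f v then 1 else -1 := by
    intro v
    unfold sgnInd
    rcases lt_trichotomy (f v) 0 with h | h | h
    · simp [h, not_lt.mpr h.le]
    · exact absurd h (hnz v)
    · simp [h]
  have hfs : ∀ v, f v * sgnInd f v = |f v| := by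
    intro v
    rw [hsgn v]
    rcases lt_trichotomy (f v) 0 with h | h | h
    · simp [not_lt.mpr h.le, abs_of_neg h]
    · exact absurd h (hnz v)
    · simp [h, abs_of_pos h]
  have hs2 : ∀ v, sgnInd f v ^ 2 = 1 := by
    intro v
    rw [hsgn v]
    split <;> norm_num
  set c : ℝ := (∑ w, f w * sgnInd f w) / n with hc
  set S : ℝ := ∑ v, f v ^ 2 with hS
  set κ : ℝ := (1 + μ) / (1 - μ₂) with hκdef
  have hcsum : ∑ w, |f w| = n * c := by
    rw [hc]
    field_simp
    exact (Finset.sum_congr rfl fun v _ => (hfs v).symm)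
  have hcnn : 0 ≤ c := by
    have : 0 ≤ ∑ w, |f w| := Finset.sum_nonneg fun w _ => abs_nonneg _
    rw [hcsum] at this
    nlinarith
  have hPstr : ∑ v, fStr f v ^ 2 = n * c ^ 2 := by
    have h1 : ∀ v, fStr f v ^ 2 = c ^ 2 := by
      intro v
      show (((∑ w, f w * sgnInd f w) / n) * sgnInd f v) ^ 2 = c ^ 2
      rw [← hc, mul_pow, hs2 v, mul_one]
    rw [Finset.sum_congr rfl fun v _ => h1 v, Finset.sum_const, Finset.card_univ,
      nsmul_eq_mul, ← hn]
  -- |μ| ≤ 1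
  have hμ1 : |μ| ≤ 1 := by
    obtain ⟨u, -, hu⟩ := Finset.exists_max_image Finset.univ (fun v => |f v|) univ_nonempty
    have hfu : 0 < |f u| := abs_pos.mpr (hnz u)
    have key : d * |μ| * |f u| ≤ d * |f u| := by
      have h1 : |d * μ * f u| = |∑ v, a u v * f v| := by rw [heig u]
      have h2 : |∑ v, a u v * f v| ≤ ∑ v, a u v * |f v| := by
        refine (Finset.abs_sum_le_sum_abs _ _).trans (le_of_eq ?_)
        exact Finset.sum_congr rfl fun v _ => by rw [abs_mul, abs_of_nonneg (hnn u v)]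
      have h3 : ∑ v, a u v * |f v| ≤ ∑ v, a u v * |f u| := by
        refine Finset.sum_le_sum fun v _ => mul_le_mul_of_nonneg_left ?_ (hnn u v)
        exact hu v (Finset.mem_univ v)
      have h4 : ∑ v, a u v * |f u| = d * |f u| := by
        rw [← Finset.sum_mul, hrow u]
      calc d * |μ| * |f u| = |d * μ * f u| := by
            rw [abs_mul, abs_mul, abs_of_pos hd]
        _ = |∑ v, a u v * f v| := h1
        _ ≤ ∑ v, a u v * |f v| := h2
        _ ≤ ∑ v, a u v * |f u| := h3
        _ = d * |f u| := h4
    have := le_of_mul_le_mul_right (by nlinarith : |μ| * (d * |f u|) ≤ 1 * (d * |f u|))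
      (by positivity : 0 < d * |f u|)
    linarith
  have h1μ : 0 ≤ 1 + μ := by
    have := abs_le.mp hμ1
    linarith [this.1]
  have hden : 0 < 1 - μ₂ := by
    rcases (div_pos_iff).mp hκ.1 with ⟨-, h⟩ | ⟨h, -⟩
    · exact h
    · linarith
  have hκnn : 0 ≤ κ := le_of_lt hκ.1
  -- column sums
  have hcol : ∀ v, ∑ u, a u v = d := by
    intro v
    rw [Finset.sum_congr rfl fun u _ => hsym u v]
    exact hrow v
  -- double sum computations
  have hAfv : ∑ u, ∑ v, a u v * |f v| = d * (n * c) := by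
    rw [Finset.sum_comm]
    have h1 : ∀ v, ∑ u, a u v * |f v| = d * |f v| := by
      intro v
      rw [← Finset.sum_mul, hcol v]
    rw [Finset.sum_congr rfl fun v _ => h1 v, ← Finset.mul_sum, hcsum]
  have hAfu : ∑ u, ∑ v, a u v * |f u| = d * (n * c) := by
    have h1 : ∀ u, ∑ v, a u v * |f u| = d * |f u| := by
      intro u
      rw [← Finset.sum_mul, hrow u]
    rw [Finset.sum_congr rfl fun u _ => h1 u, ← Finset.mul_sum, hcsum]
  have hAtot : ∑ u, ∑ v, (a u v : ℝ) = n * d := by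
    rw [Finset.sum_congr rfl fun u _ => hrow u, Finset.sum_const, Finset.card_univ,
      nsmul_eq_mul, ← hn]
  have hAff : ∑ u, ∑ v, a u v * f u * f v = d * μ * S := by
    have h1 : ∀ u, ∑ v, a u v * f u * f v = f u * (d * μ * f u) := by
      intro u
      rw [← heig u, Finset.mul_sum]
      exact Finset.sum_congr rfl fun v _ => by ring
    rw [Finset.sum_congr rfl fun u _ => h1 u, hS, Finset.mul_sum]
    exact Finset.sum_congr rfl fun u _ => by ring
  -- apply Rayleigh bound to g = |f| - c
  have hgsum : ∑ v, (|f v| - c) = 0 := by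
    rw [Finset.sum_sub_distrib, hcsum, Finset.sum_const, Finset.card_univ, nsmul_eq_mul, ← hn]
    ring
  have hg2 : ∑ v, (|f v| - c) ^ 2 = S - n * c ^ 2 := by
    have h1 : ∀ v, (|f v| - c) ^ 2 = f v ^ 2 - 2 * c * |f v| + c ^ 2 := by
      intro v
      have : |f v| ^ 2 = f v ^ 2 := sq_abs _
      nlinarith [this]
    rw [Finset.sum_congr rfl fun v _ => h1 v, Finset.sum_add_distrib, Finset.sum_sub_distrib,
      ← Finset.mul_sum, hcsum, Finset.sum_const, Finset.card_univ, nsmul_eq_mul, ← hn, ← hS]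
    ring
  have hexp : ∑ u, ∑ v, a u v * (|f u| - c) * (|f v| - c)
      = (∑ u, ∑ v, a u v * |f u| * |f v|) - n * d * c ^ 2 := by
    have h1 : ∀ u v, a u v * (|f u| - c) * (|f v| - c)
        = a u v * |f u| * |f v| - c * (a u v * |f u|) - c * (a u v * |f v|) + c ^ 2 * a u v := by
      intro u v; ring
    calc ∑ u, ∑ v, a u v * (|f u| - c) * (|f v| - c)
        = (∑ u, ∑ v, a u v * |f u| * |f v|) - c * (∑ u, ∑ v, a u v * |f u|)
          - c * (∑ u, ∑ v, a u v * |f v|) + c ^ 2 * (∑ u, ∑ v, a u v) := by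
          simp_rw [Finset.mul_sum, ← Finset.sum_sub_distrib, ← Finset.sum_add_distrib]
          exact Finset.sum_congr rfl fun u _ => Finset.sum_congr rfl fun v _ => h1 u v
      _ = _ := by rw [hAfu, hAfv, hAtot]; ring
  set A : ℝ := ∑ u, ∑ v, a u v * |f u| * |f v| with hAdef
  have hAbd : -(d * μ * S) ≤ A := by
    rw [hAdef]
    have h1 : ∀ u v, -(a u v * f u * f v) ≤ a u v * |f u| * |f v| := by
      intro u v
      have h2 : -(f u * f v) ≤ |f u| * |f v| := by
        rw [← abs_mul]; exact neg_le_abs _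
      nlinarith [hnn u v]
    calc -(d * μ * S) = ∑ u, ∑ v, -(a u v * f u * f v) := by
          rw [← hAff]; simp [Finset.sum_neg_distrib]
      _ ≤ _ := Finset.sum_le_sum fun u _ => Finset.sum_le_sum fun v _ => h1 u v
  clear_value n c S κ A
  have hrg : A - n * d * c ^ 2 ≤ d * μ₂ * (S - n * c ^ 2) := by
    calc A - n * d * c ^ 2 = ∑ u, ∑ v, a u v * (|f u| - c) * (|f v| - c) := hexp.symm
      _ ≤ d * μ₂ * ∑ v, (|f v| - c) ^ 2 := hray (fun v => |f v| - c) hgsum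
      _ = d * μ₂ * (S - n * c ^ 2) := by rw [hg2]
  -- key decomposition bound: ‖f_sml‖² ≤ κ S
  have hQnn : 0 ≤ S - n * c ^ 2 := by
    rw [← hg2]; exact Finset.sum_nonneg fun v _ => sq_nonneg _
  have hB : S - n * c ^ 2 ≤ κ * S := by
    have h5 : d * (-(μ * S) - n * c ^ 2) ≤ d * (μ₂ * (S - n * c ^ 2)) := by linarith [hrg, hAbd]
    have hcomb : -(μ * S) - n * c ^ 2 ≤ μ₂ * (S - n * c ^ 2) :=
      le_of_mul_le_mul_left h5 hd
    rw [hκdef, div_mul_eq_mul_div, le_div_iff₀ hden]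
    nlinarith [hcomb]
  have hSnn : 0 ≤ S := by
    rw [hS]; exact Finset.sum_nonneg fun v _ => sq_nonneg _
  have hPS : n * c ^ 2 ≤ S := by linarith
  -- now the main estimate
  set I : Finset V := Finset.univ.filter fun v => 0 < f v ∧ 0 < f (π.symm v) with hI
  set m : V → ℝ := fun v => f v - c * sgnInd f v with hm
  have hQm : ∑ v, m v ^ 2 = S - n * c ^ 2 := by
    rw [← hg2]
    refine Finset.sum_congr rfl fun v _ => ?_
    simp only [hm]
    linear_combination (-2 * c) * hfs v + c ^ 2 * hs2 v - sq_abs (f v)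
  -- LHS rewriting
  have hLHS : ∑ v, max (f v) 0 * max (f (π.symm v)) 0 = ∑ v ∈ I, f v * f (π.symm v) := by
    rw [hI, Finset.sum_filter]
    refine Finset.sum_congr rfl fun v _ => ?_
    by_cases h1 : 0 < f v
    · by_cases h2 : 0 < f (π.symm v)
      · simp [h1, h2, max_eq_left h1.le, max_eq_left h2.le]
      · simp [h1, h2, max_eq_right (not_lt.mp h2)]
    · simp [h1, max_eq_right (not_lt.mp h1)]
  have hsplit : ∑ v ∈ I, f v * f (π.symm v)
      = (I.card : ℝ) * c ^ 2 +
        (c * ∑ v ∈ I, m v + c * ∑ v ∈ I, m (π.symm v) + ∑ v ∈ I, m v * m (π.symm v)) := by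
    have h1 : ∀ v ∈ I, f v * f (π.symm v)
        = c ^ 2 + (c * m v + c * m (π.symm v) + m v * m (π.symm v)) := by
      intro v hv
      rw [hI, Finset.mem_filter] at hv
      obtain ⟨-, h1, h2⟩ := hv
      have e1 : sgnInd f v = 1 := by rw [hsgn v]; simp [h1]
      have e2 : sgnInd f (π.symm v) = 1 := by rw [hsgn _]; simp [h2]
      simp only [hm, e1, e2]
      ring
    rw [Finset.sum_congr rfl h1, Finset.sum_add_distrib, Finset.sum_const, nsmul_eq_mul,
      Finset.sum_add_distrib, Finset.sum_add_distrib, ← Finset.mul_sum, ← Finset.mul_sum]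
  -- Cauchy-Schwarz bounds
  have hQI : ∑ v ∈ I, m v ^ 2 ≤ S - n * c ^ 2 := by
    rw [← hQm]
    exact Finset.sum_le_sum_of_subset_of_nonneg (Finset.subset_univ I)
      fun v _ _ => sq_nonneg _
  have hQI' : ∑ v ∈ I, m (π.symm v) ^ 2 ≤ S - n * c ^ 2 := by
    have : ∑ v, m (π.symm v) ^ 2 = S - n * c ^ 2 := by
      rw [← hQm]
      exact Equiv.sum_comp π.symm fun v => m v ^ 2
    rw [← this]
    exact Finset.sum_le_sum_of_subset_of_nonneg (Finset.subset_univ I)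
      fun v _ _ => sq_nonneg _
  set Q : ℝ := S - n * c ^ 2 with hQdef
  have habs_bound : ∀ g : V → ℝ, (∑ v ∈ I, g v ^ 2 ≤ Q) →
      |c * ∑ v ∈ I, g v| ≤ Real.sqrt ((I.card : ℝ) * c ^ 2) * Real.sqrt Q := by
    intro g hg
    have cs : (∑ v ∈ I, g v) ^ 2 ≤ (I.card : ℝ) * ∑ v ∈ I, g v ^ 2 := by
      have := Finset.sum_mul_sq_le_sq_mul_sq I (fun _ => (1:ℝ)) g
      simpa using this
    have h1 : (c * ∑ v ∈ I, g v) ^ 2 ≤ ((I.card : ℝ) * c ^ 2) * Q := by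
      have hcard : (0:ℝ) ≤ (I.card : ℝ) := Nat.cast_nonneg _
      calc (c * ∑ v ∈ I, g v) ^ 2 = c ^ 2 * (∑ v ∈ I, g v) ^ 2 := by ring
        _ ≤ c ^ 2 * ((I.card : ℝ) * ∑ v ∈ I, g v ^ 2) :=
            mul_le_mul_of_nonneg_left cs (sq_nonneg c)
        _ ≤ c ^ 2 * ((I.card : ℝ) * Q) := by
            exact mul_le_mul_of_nonneg_left (mul_le_mul_of_nonneg_left hg hcard) (sq_nonneg c)
        _ = ((I.card : ℝ) * c ^ 2) * Q := by ring
    calc |c * ∑ v ∈ I, g v| = Real.sqrt ((c * ∑ v ∈ I, g v) ^ 2) :=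
          (Real.sqrt_sq_eq_abs _).symm
      _ ≤ Real.sqrt (((I.card : ℝ) * c ^ 2) * Q) := Real.sqrt_le_sqrt h1
      _ = Real.sqrt ((I.card : ℝ) * c ^ 2) * Real.sqrt Q :=
          Real.sqrt_mul (mul_nonneg (Nat.cast_nonneg _) (sq_nonneg c)) _
  have hE1 := habs_bound m hQI
  have hE2 := habs_bound (fun v => m (π.symm v)) hQI'
  have hE3 : |∑ v ∈ I, m v * m (π.symm v)| ≤ Q := by
    have cs := Finset.sum_mul_sq_le_sq_mul_sq I m (fun v => m (π.symm v))
    have h1 : (∑ v ∈ I, m v * m (π.symm v)) ^ 2 ≤ Q * Q :=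
      cs.trans (mul_le_mul hQI hQI' (Finset.sum_nonneg fun v _ => sq_nonneg _)
        (le_trans (Finset.sum_nonneg fun v _ => sq_nonneg _) hQI))
    calc |∑ v ∈ I, m v * m (π.symm v)| = Real.sqrt ((∑ v ∈ I, m v * m (π.symm v)) ^ 2) :=
          (Real.sqrt_sq_eq_abs _).symm
      _ ≤ Real.sqrt (Q * Q) := Real.sqrt_le_sqrt h1
      _ = Q := Real.sqrt_mul_self hQnn
  -- assemble
  have hmain : |(∑ v, max (f v) 0 * max (f (π.symm v)) 0) - ((I.card : ℝ) / n) * ∑ v, fStr f v ^ 2|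
      ≤ 2 * (Real.sqrt ((I.card : ℝ) * c ^ 2) * Real.sqrt Q) + Q := by
    rw [hLHS, hsplit, hPstr]
    have hcards : ((I.card : ℝ) / n) * (n * c ^ 2) = (I.card : ℝ) * c ^ 2 := by
      rw [div_mul_eq_mul_div, div_eq_iff hn0.ne']
      ring
    rw [hcards]
    have : (I.card : ℝ) * c ^ 2 +
        (c * ∑ v ∈ I, m v + c * ∑ v ∈ I, m (π.symm v) + ∑ v ∈ I, m v * m (π.symm v)) -
        (I.card : ℝ) * c ^ 2
        = c * ∑ v ∈ I, m v + c * ∑ v ∈ I, m (π.symm v) + ∑ v ∈ I, m v * m (π.symm v) := by ring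
    rw [this]
    calc |c * ∑ v ∈ I, m v + c * ∑ v ∈ I, m (π.symm v) + ∑ v ∈ I, m v * m (π.symm v)|
        ≤ |c * ∑ v ∈ I, m v| + |c * ∑ v ∈ I, m (π.symm v)| + |∑ v ∈ I, m v * m (π.symm v)| := by
          exact (abs_add_le _ _).trans (add_le_add_left (abs_add_le _ _) _)
      _ ≤ _ := by linarith [hE1, hE2, hE3]
  -- bound the error terms by the target
  have hQκ : Q ≤ κ * S := hB
  have hfinal : 2 * (Real.sqrt ((I.card : ℝ) * c ^ 2) * Real.sqrt Q) + Q
      ≤ (2 * Real.sqrt ((I.card : ℝ) / n) * Real.sqrt κ + κ) * S := by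
    have h1 : Real.sqrt ((I.card : ℝ) * c ^ 2) * Real.sqrt Q
        ≤ Real.sqrt ((I.card : ℝ) / n) * Real.sqrt κ * S := by
      have e1 : (I.card : ℝ) * c ^ 2 = ((I.card : ℝ) / n) * (n * c ^ 2) := by
        rw [div_mul_eq_mul_div, eq_div_iff hn0.ne']
        ring
      have h2 : Real.sqrt ((I.card : ℝ) * c ^ 2)
          ≤ Real.sqrt ((I.card : ℝ) / n) * Real.sqrt S := by
        rw [e1, Real.sqrt_mul (div_nonneg (Nat.cast_nonneg _) hn0.le)]
        exact mul_le_mul_of_nonneg_left (Real.sqrt_le_sqrt hPS) (Real.sqrt_nonneg _)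
      have h3 : Real.sqrt Q ≤ Real.sqrt κ * Real.sqrt S := by
        rw [← Real.sqrt_mul hκnn]
        exact Real.sqrt_le_sqrt hQκ
      calc Real.sqrt ((I.card : ℝ) * c ^ 2) * Real.sqrt Q
          ≤ (Real.sqrt ((I.card : ℝ) / n) * Real.sqrt S) * (Real.sqrt κ * Real.sqrt S) := by
            exact mul_le_mul h2 h3 (Real.sqrt_nonneg _) (mul_nonneg (Real.sqrt_nonneg _) (Real.sqrt_nonneg _))
        _ = Real.sqrt ((I.card : ℝ) / n) * Real.sqrt κ * (Real.sqrt S * Real.sqrt S) := by ring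
        _ = Real.sqrt ((I.card : ℝ) / n) * Real.sqrt κ * S := by
            rw [Real.mul_self_sqrt hSnn]
    nlinarith [h1, hQκ]
  calc |(∑ v, max (f v) 0 * max (f (π.symm v)) 0) - ((I.card : ℝ) / n) * ∑ v, fStr f v ^ 2|
      ≤ 2 * (Real.sqrt ((I.card : ℝ) * c ^ 2) * Real.sqrt Q) + Q := hmain
    _ ≤ (2 * Real.sqrt ((I.card : ℝ) / n) * Real.sqrt κ + κ) * S := hfinal
end

section
/- Let V be a finite set, T : ℓ²(V) → ℓ²(V) self-adjoint with nonnegative entries and constant row sums d > 0, and second largest eigenvalue dμ₂. Suppose for every τ in a group G acting transitively on V there is a permutation ϱ_τ of V with ⟨T1_A, 1_B⟩ = ⟨T1_{τ(A)}, 1_{ϱ_τ(B)}⟩ for all subsets A, B of V. Let y be an eigenvector of T with eigenvalue dμ̃ satisfying 1 + μ̃ < 1 − μ₂. Then for every τ ∈ G, y ∘ τ⁻¹ = y ∘ ϱ_τ⁻¹, and y ∘ τ⁻¹ is again an eigenvector of T with eigenvalue dμ̃. -/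
open Finset

/-- Let `T` be self-adjoint on `ℓ²(V)` with nonnegative entries `a u v`, constant row
sums `d > 0`, second largest eigenvalue `d·μ₂` (Rayleigh bound on the complement of
constants).  Suppose a group `G` acts transitively on `V` and for each `τ ∈ G` there
is a permutation `ϱ τ` of `V` with `⟨T1_A,1_B⟩ = ⟨T1_{τ(A)},1_{ϱ_τ(B)}⟩` for all
subsets, i.e. `a u v = a (τ⁻¹ • u) ((ϱ τ)⁻¹ v)` for all `u, v`.  If `y` is an
eigenvector with eigenvalue `d·μ̃` and `1 + μ̃ < 1 − μ₂`, then for every `τ`,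
`y ∘ τ⁻¹ = y ∘ (ϱ τ)⁻¹`, and `y ∘ τ⁻¹` is again an eigenvector with eigenvalue
`d·μ̃`. -/
theorem translate_eigenvector {G V : Type*} [Group G] [Fintype V]
    [MulAction G V] (htrans : MulAction.IsPretransitive G V)
    (a : V → V → ℝ) (hsym : ∀ u v, a u v = a v u) (hnn : ∀ u v, 0 ≤ a u v)
    (d μ₂ μt : ℝ) (hd : 0 < d) (hrow : ∀ u, ∑ v, a u v = d)
    (hray : ∀ g : V → ℝ, (∑ v, g v) = 0 →
      (∑ u, ∑ v, a u v * g u * g v) ≤ d * μ₂ * ∑ v, g v ^ 2)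
    (ϱ : G → Equiv.Perm V)
    (hϱ : ∀ (τ : G) (u v : V), a u v = a (τ⁻¹ • u) ((ϱ τ).symm v))
    (y : V → ℝ) (hy : y ≠ 0)
    (heig : ∀ u, ∑ v, a u v * y v = d * μt * y u)
    (hgap : 1 + μt < 1 - μ₂) :
    ∀ τ : G,
      (fun v => y (τ⁻¹ • v)) = (fun v => y ((ϱ τ).symm v)) ∧
      ∀ u, ∑ v, a u v * y (τ⁻¹ • v) = d * μt * y (τ⁻¹ • u) := by

  intro τ
  have hT1 : ∀ u, ∑ v, a u v * y (τ⁻¹ • v) = d * μt * y ((ϱ τ).symm u) := by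
    intro u
    calc ∑ v, a u v * y (τ⁻¹ • v)
        = ∑ v, a ((ϱ τ).symm u) (τ⁻¹ • v) * y (τ⁻¹ • v) := by
          refine Finset.sum_congr rfl fun v _ => ?_
          rw [hsym u v, hϱ τ v u, hsym]
      _ = ∑ w, a ((ϱ τ).symm u) w * y w :=
          Fintype.sum_bijective (fun v => τ⁻¹ • v) (MulAction.bijective τ⁻¹) _ _ (fun v => rfl)
      _ = d * μt * y ((ϱ τ).symm u) := heig _
  have hT2 : ∀ u, ∑ v, a u v * y ((ϱ τ).symm v) = d * μt * y (τ⁻¹ • u) := by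
    intro u
    calc ∑ v, a u v * y ((ϱ τ).symm v)
        = ∑ v, a (τ⁻¹ • u) ((ϱ τ).symm v) * y ((ϱ τ).symm v) :=
          Finset.sum_congr rfl fun v _ => by rw [← hϱ τ u v]
      _ = ∑ w, a (τ⁻¹ • u) w * y w :=
          Fintype.sum_bijective (ϱ τ).symm (ϱ τ).symm.bijective _ _ (fun v => rfl)
      _ = d * μt * y (τ⁻¹ • u) := heig _
  set g : V → ℝ := fun v => y (τ⁻¹ • v) - y ((ϱ τ).symm v) with hg
  have hsum0 : ∑ v, g v = 0 := by
    have h1 : ∑ v, y (τ⁻¹ • v) = ∑ v, y v :=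
      Fintype.sum_bijective (fun v => τ⁻¹ • v) (MulAction.bijective τ⁻¹) _ _ (fun v => rfl)
    have h2 : ∑ v, y ((ϱ τ).symm v) = ∑ v, y v :=
      Fintype.sum_bijective (ϱ τ).symm (ϱ τ).symm.bijective _ _ (fun v => rfl)
    simp [hg, Finset.sum_sub_distrib, h1, h2]
  have hTg : ∀ u, ∑ v, a u v * g v = -(d * μt) * g u := by
    intro u
    have : ∑ v, a u v * g v
        = (∑ v, a u v * y (τ⁻¹ • v)) - ∑ v, a u v * y ((ϱ τ).symm v) := by
      rw [← Finset.sum_sub_distrib]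
      exact Finset.sum_congr rfl fun v _ => by simp [hg]; ring
    rw [this, hT1, hT2]
    simp [hg]; ring
  have hquad : ∑ u, ∑ v, a u v * g u * g v = -(d * μt) * ∑ v, g v ^ 2 := by
    rw [Finset.mul_sum]
    refine Finset.sum_congr rfl fun u _ => ?_
    calc ∑ v, a u v * g u * g v = g u * ∑ v, a u v * g v := by
          rw [Finset.mul_sum]; exact Finset.sum_congr rfl fun v _ => by ring
      _ = -(d * μt) * g u ^ 2 := by rw [hTg]; ring
  have hrb := hray g hsum0
  rw [hquad] at hrb
  have hsq : ∀ v, (0:ℝ) ≤ g v ^ 2 := fun v => sq_nonneg _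
  have hsum_nonneg : (0:ℝ) ≤ ∑ v, g v ^ 2 := Finset.sum_nonneg fun v _ => hsq v
  have hμ : μt + μ₂ < 0 := by linarith
  have hzero : ∑ v, g v ^ 2 = 0 := by nlinarith [mul_pos hd (neg_pos.mpr hμ)]
  have hg0 : ∀ v, g v = 0 := by
    intro v
    have := (Finset.sum_eq_zero_iff_of_nonneg (fun v _ => hsq v)).mp hzero v (Finset.mem_univ v)
    exact pow_eq_zero_iff (by norm_num) |>.mp this
  have heqfun : (fun v => y (τ⁻¹ • v)) = (fun v => y ((ϱ τ).symm v)) := by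
    funext v
    have := hg0 v
    simpa [hg, sub_eq_zero] using this
  refine ⟨heqfun, fun u => ?_⟩
  have h1 := hT1 u
  have h2 : y ((ϱ τ).symm u) = y (τ⁻¹ • u) := (congrFun heqfun u).symm
  rw [h1, h2]
end
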